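/- arXiv:1107.2636 — 5 statements merged into one kernel-verified Lean document; each statement's English description precedes it below -/
import Mathlib

section
/- p_c ≥ (√5 − 1)/2, where p_c := inf{ p ∈ [0,1] : lim_{n→∞} T_n(p) = 1 }. -/
open Set Filter Topology

noncomputable section

/-- The dyadic tile `[a/2^i, (a+1)/2^i] × [b/2^j, (b+1)/2^j]` as a subset of `ℝ × ℝ`. -/
def dyadicTile (i j a b : ℕ) : Set (ℝ × ℝ) :=
  Set.Icc ((a : ℝ) / 2 ^ i) (((a : ℝ) + 1) / 2 ^ i) ×ˢ
    Set.Icc ((b : ℝ) / 2 ^ j) (((b : ℝ) + 1) / 2 ^ j)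

/-- `t` is a dyadic tile of order `n` contained in the unit square. -/
def IsDyadicTile (n : ℕ) (t : Set (ℝ × ℝ)) : Prop :=
  ∃ i j a b : ℕ, i + j = n ∧ a < 2 ^ i ∧ b < 2 ^ j ∧ t = dyadicTile i j a b

/-- `F` is a tiling of the region `R` by dyadic tiles of order `n`:
a set of order-`n` tiles whose union is `R` and whose interiors are pairwise disjoint. -/
def IsTiling (n : ℕ) (F : Set (Set (ℝ × ℝ))) (R : Set (ℝ × ℝ)) : Prop :=
  (∀ t ∈ F, IsDyadicTile n t) ∧ ⋃₀ F = R ∧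
    F.Pairwise fun s t => interior s ∩ interior t = ∅

def unitSquare : Set (ℝ × ℝ) := Set.Icc (0 : ℝ) 1 ×ˢ Set.Icc (0 : ℝ) 1

/-- Index type for the dyadic tiles of order `n`: a shape `i` (width `2^{-i}`, height
`2^{-(n-i)}`) together with the horizontal and vertical positions. -/
abbrev TileIndex (n : ℕ) : Type :=
  Σ i : Fin (n + 1), Fin (2 ^ (i : ℕ)) × Fin (2 ^ (n - (i : ℕ)))

/-- The order-`n` tile corresponding to an index. -/
def tileOf (n : ℕ) (x : TileIndex n) : Set (ℝ × ℝ) :=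
  dyadicTile (x.1 : ℕ) (n - (x.1 : ℕ)) (x.2.1 : ℕ) (x.2.2 : ℕ)

/-- The set `S` of available order-`n` tiles admits a tiling of the unit square. -/
def TileableSquare (n : ℕ) (S : Finset (TileIndex n)) : Prop :=
  ∃ F : Set (Set (ℝ × ℝ)), (∀ t ∈ F, ∃ x ∈ S, t = tileOf n x) ∧ IsTiling n F unitSquare

open Classical in
/-- Probability of the event `E` when each of the `(n+1)·2^n` order-`n` dyadic tiles is
available independently with probability `p`. -/
def Pr (n : ℕ) (p : ℝ) (E : Finset (TileIndex n) → Prop) : ℝ :=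
  ∑ S : Finset (TileIndex n),
    if E S then p ^ S.card * (1 - p) ^ ((n + 1) * 2 ^ n - S.card) else 0

/-- `T n p`: the probability that some set of available order-`n` tiles tiles `[0,1]²`. -/
def T (n : ℕ) (p : ℝ) : ℝ := Pr n p (TileableSquare n)

/-- The critical probability `p_c`. -/
def pc : ℝ :=
  sInf {p : ℝ | p ∈ Set.Icc (0 : ℝ) 1 ∧ Tendsto (fun n => T n p) atTop (𝓝 1)}



open Classical in
/-- product Bernoulli measure of an event on random subsets of a fintype -/
def Pm (α : Type*) [Fintype α] (p : ℝ) (E : Finset α → Prop) : ℝ :=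
  ∑ S : Finset α, if E S then p ^ S.card * (1 - p) ^ (Fintype.card α - S.card) else 0

open Classical in
/-- expectation over random subsets of a finite ground set `s` -/
def Em {α : Type*} (p : ℝ) (s : Finset α) (f : Finset α → ℝ) : ℝ :=
  ∑ S ∈ s.powerset, f S * p ^ S.card * (1 - p) ^ (s.card - S.card)

open Classical in
lemma Pm_eq_Em {α : Type*} [Fintype α] (p : ℝ) (E : Finset α → Prop) :
    Pm α p E = Em p Finset.univ (fun S => if E S then 1 else 0) := by
  rw [Pm, Em]
  rw [show (Finset.univ : Finset α).powerset = (Finset.univ : Finset (Finset α)) from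
    Finset.powerset_univ]
  refine Finset.sum_congr rfl fun S _ => ?_
  by_cases h : E S <;> simp [h, Finset.card_univ]

lemma Em_insert {α : Type*} [DecidableEq α] {a : α} {s : Finset α} (ha : a ∉ s) (p : ℝ) (f : Finset α → ℝ) :
    Em p (insert a s) f
      = (1 - p) * Em p s f + p * Em p s (fun S => f (insert a S)) := by
  classical
  rw [Em, Finset.powerset_insert, Finset.sum_union]
  · have h1 : ∑ S ∈ s.powerset, f S * p ^ S.card * (1 - p) ^ ((insert a s).card - S.card)
        = (1 - p) * Em p s f := by
      rw [Em, Finset.mul_sum]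
      refine Finset.sum_congr rfl fun S hS => ?_
      have hcard : S.card ≤ s.card := Finset.card_le_card (Finset.mem_powerset.1 hS)
      rw [Finset.card_insert_of_notMem ha]
      have : s.card + 1 - S.card = (s.card - S.card) + 1 := by omega
      rw [this, pow_succ]
      ring
    have h2 : ∑ S ∈ s.powerset.image (insert a),
          f S * p ^ S.card * (1 - p) ^ ((insert a s).card - S.card)
        = p * Em p s (fun S => f (insert a S)) := by
      rw [Finset.sum_image, Em, Finset.mul_sum]
      · refine Finset.sum_congr rfl fun S hS => ?_
        have hS' := Finset.mem_powerset.1 hS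
        have haS : a ∉ S := fun h => ha (hS' h)
        have hcard : S.card ≤ s.card := Finset.card_le_card hS'
        rw [Finset.card_insert_of_notMem haS, Finset.card_insert_of_notMem ha]
        have : s.card + 1 - (S.card + 1) = s.card - S.card := by omega
        rw [this, pow_succ]
        ring
      · intro S hS T hT h
        have haS : a ∉ S := fun hm => ha (Finset.mem_powerset.1 hS hm)
        have haT : a ∉ T := fun hm => ha (Finset.mem_powerset.1 hT hm)
        have := congrArg (Finset.erase · a) h
        simpa [Finset.erase_insert haS, Finset.erase_insert haT] using this
    rw [h1, h2]
  · rw [Finset.disjoint_right]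
    rintro S hS hS'
    obtain ⟨U, hU, rfl⟩ := Finset.mem_image.1 hS
    exact ha (Finset.mem_powerset.1 hS' (Finset.mem_insert_self a U))

lemma Em_one {α : Type*} (p : ℝ) (s : Finset α) : Em p s (fun _ => 1) = 1 := by
  classical
  induction s using Finset.induction_on with
  | empty => simp [Em]
  | insert a s ha ih => rw [Em_insert ha]; rw [ih]; ring

lemma Em_mono {α : Type*} {p : ℝ} (hp0 : 0 ≤ p) (hp1 : p ≤ 1) (s : Finset α)
    {f g : Finset α → ℝ} (h : ∀ S, S ⊆ s → f S ≤ g S) : Em p s f ≤ Em p s g := by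
  refine Finset.sum_le_sum fun S hS => ?_
  have := h S (Finset.mem_powerset.1 hS)
  have w1 : (0:ℝ) ≤ p ^ S.card := pow_nonneg hp0 _
  have w2 : (0:ℝ) ≤ (1 - p) ^ (s.card - S.card) := pow_nonneg (by linarith) _
  exact mul_le_mul_of_nonneg_right (mul_le_mul_of_nonneg_right this w1) w2

lemma Em_nonneg {α : Type*} {p : ℝ} (hp0 : 0 ≤ p) (hp1 : p ≤ 1) (s : Finset α)
    {f : Finset α → ℝ} (h : ∀ S, 0 ≤ f S) : 0 ≤ Em p s f := by
  refine Finset.sum_nonneg fun S _ => ?_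
  have w1 : (0:ℝ) ≤ p ^ S.card := pow_nonneg hp0 _
  have w2 : (0:ℝ) ≤ (1 - p) ^ (s.card - S.card) := pow_nonneg (by linarith) _
  exact mul_nonneg (mul_nonneg (h S) w1) w2

/-- Harris / FKG inequality for monotone functions. -/
lemma Em_harris {α : Type*} {p : ℝ} (hp0 : 0 ≤ p) (hp1 : p ≤ 1) (s : Finset α)
    {f g : Finset α → ℝ} (hf : ∀ S T, S ⊆ T → f S ≤ f T) (hg : ∀ S T, S ⊆ T → g S ≤ g T) :
    Em p s f * Em p s g ≤ Em p s (fun S => f S * g S) := by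
  classical
  induction s using Finset.induction_on generalizing f g with
  | empty => simp [Em]
  | @insert a s ha ih =>
    rw [Em_insert ha, Em_insert ha, Em_insert ha]
    set A0 := Em p s f with hA0
    set A1 := Em p s (fun S => f (insert a S)) with hA1
    set B0 := Em p s g with hB0
    set B1 := Em p s (fun S => g (insert a S)) with hB1
    have hab0 : A0 * B0 ≤ Em p s (fun S => f S * g S) := ih hf hg
    have hab1 : A1 * B1 ≤ Em p s (fun S => f (insert a S) * g (insert a S)) := by
      exact ih (fun S T hST => hf _ _ (Finset.insert_subset_insert a hST))
        (fun S T hST => hg _ _ (Finset.insert_subset_insert a hST))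
    have hA : A0 ≤ A1 := Em_mono hp0 hp1 s fun S _ => hf S (insert a S) (Finset.subset_insert a S)
    have hB : B0 ≤ B1 := Em_mono hp0 hp1 s fun S _ => hg S (insert a S) (Finset.subset_insert a S)
    have key : ((1 - p) * A0 + p * A1) * ((1 - p) * B0 + p * B1)
        ≤ (1 - p) * (A0 * B0) + p * (A1 * B1) := by
      nlinarith [mul_nonneg (mul_nonneg hp0 (by linarith : (0:ℝ) ≤ 1 - p))
        (mul_nonneg (sub_nonneg.2 hA) (sub_nonneg.2 hB))]
    calc ((1 - p) * A0 + p * A1) * ((1 - p) * B0 + p * B1)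
        ≤ (1 - p) * (A0 * B0) + p * (A1 * B1) := key
      _ ≤ (1 - p) * Em p s (fun S => f S * g S)
            + p * Em p s (fun S => f (insert a S) * g (insert a S)) := by
          have hq : (0:ℝ) ≤ 1 - p := by linarith
          have := mul_le_mul_of_nonneg_left hab0 hq
          have := mul_le_mul_of_nonneg_left hab1 hp0
          linarith

open Classical in
def pull {α β : Type*} [Fintype β] (f : β → α) (S : Finset α) : Finset β :=
  Finset.univ.filter (fun y => f y ∈ S)

lemma mem_pull {α β : Type*} [Fintype β] {f : β → α} {S : Finset α} {y : β} :
    y ∈ pull f S ↔ f y ∈ S := by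
  classical simp [pull]

lemma pull_mono {α β : Type*} [Fintype β] (f : β → α) {S S' : Finset α} (h : S ⊆ S') :
    pull f S ⊆ pull f S' := fun y hy => mem_pull.2 (h (mem_pull.1 hy))

lemma Pm_congr {α : Type*} [Fintype α] (p : ℝ) {E F : Finset α → Prop}
    (h : ∀ S, E S ↔ F S) : Pm α p E = Pm α p F := by
  classical
  refine Finset.sum_congr rfl fun S _ => ?_
  simp only [h]

lemma Pm_nonneg {α : Type*} [Fintype α] {p : ℝ} (hp0 : 0 ≤ p) (hp1 : p ≤ 1)
    (E : Finset α → Prop) : 0 ≤ Pm α p E := by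
  classical
  refine Finset.sum_nonneg fun S _ => ?_
  have w1 : (0:ℝ) ≤ p ^ S.card := pow_nonneg hp0 _
  have w2 : (0:ℝ) ≤ (1 - p) ^ (Fintype.card α - S.card) := pow_nonneg (by linarith) _
  by_cases h : E S <;> simp [h]
  positivity

lemma Pm_mono {α : Type*} [Fintype α] {p : ℝ} (hp0 : 0 ≤ p) (hp1 : p ≤ 1)
    {E F : Finset α → Prop} (h : ∀ S, E S → F S) : Pm α p E ≤ Pm α p F := by
  classical
  refine Finset.sum_le_sum fun S _ => ?_
  have w1 : (0:ℝ) ≤ p ^ S.card := pow_nonneg hp0 _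
  have w2 : (0:ℝ) ≤ (1 - p) ^ (Fintype.card α - S.card) := pow_nonneg (by linarith) _
  by_cases hE : E S
  · simp [hE, h S hE]
  · simp only [hE, if_false]
    by_cases hF : F S <;> simp [hF]
    positivity

lemma Pm_true {α : Type*} [Fintype α] (p : ℝ) : Pm α p (fun _ => True) = 1 := by
  rw [Pm_eq_Em]
  simpa using Em_one p (Finset.univ : Finset α)

lemma Pm_le_one {α : Type*} [Fintype α] {p : ℝ} (hp0 : 0 ≤ p) (hp1 : p ≤ 1)
    (E : Finset α → Prop) : Pm α p E ≤ 1 := by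
  rw [← Pm_true (α := α) p]
  exact Pm_mono hp0 hp1 fun S _ => trivial

/-- inclusion–exclusion -/
lemma Pm_union {α : Type*} [Fintype α] (p : ℝ) (E F : Finset α → Prop) :
    Pm α p (fun S => E S ∨ F S) = Pm α p E + Pm α p F - Pm α p (fun S => E S ∧ F S) := by
  classical
  have : Pm α p (fun S => E S ∨ F S) + Pm α p (fun S => E S ∧ F S)
      = Pm α p E + Pm α p F := by
    rw [Pm, Pm, Pm, Pm, ← Finset.sum_add_distrib, ← Finset.sum_add_distrib]
    refine Finset.sum_congr rfl fun S _ => ?_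
    by_cases hE : E S <;> by_cases hF : F S <;> simp [hE, hF]
  linarith

/-- Harris inequality for monotone events. -/
lemma Pm_harris {α : Type*} [Fintype α] {p : ℝ} (hp0 : 0 ≤ p) (hp1 : p ≤ 1)
    {E F : Finset α → Prop} (hE : ∀ S T, S ⊆ T → E S → E T) (hF : ∀ S T, S ⊆ T → F S → F T) :
    Pm α p E * Pm α p F ≤ Pm α p (fun S => E S ∧ F S) := by
  classical
  rw [Pm_eq_Em, Pm_eq_Em, Pm_eq_Em]
  have h := Em_harris hp0 hp1 (Finset.univ : Finset α)
    (f := fun S => if E S then (1:ℝ) else 0) (g := fun S => if F S then (1:ℝ) else 0)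
    (by intro S T hST; by_cases h : E S
        · simp [h, hE S T hST h]
        · by_cases h' : E T <;> simp [h, h']
      )
    (by intro S T hST; by_cases h : F S
        · simp [h, hF S T hST h]
        · by_cases h' : F T <;> simp [h, h']
      )
  refine h.trans (le_of_eq ?_)
  refine Finset.sum_congr rfl fun S _ => ?_
  by_cases hE' : E S <;> by_cases hF' : F S <;> simp [hE', hF']

/-- invariance of `Pm` under a bijective reindexing of the ground type. -/
lemma Pm_map_equiv {α β : Type*} [Fintype α] [Fintype β] (e : β ≃ α) (p : ℝ)
    (E : Finset α → Prop) :
    Pm α p E = Pm β p (fun S => E (S.map e.toEmbedding)) := by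
  classical
  rw [Pm, Pm]
  rw [← Equiv.sum_comp e.finsetCongr
    (fun S : Finset α => if E S then p ^ S.card * (1-p) ^ (Fintype.card α - S.card) else 0)]
  refine Finset.sum_congr rfl fun S _ => ?_
  rw [Equiv.finsetCongr_apply, Finset.card_map, Fintype.card_congr e]

/-- independence: splitting over a sum type. -/
lemma Pm_sum_split {β γ : Type*} [Fintype β] [Fintype γ] (p : ℝ)
    (E₁ : Finset β → Prop) (E₂ : Finset γ → Prop) :
    Pm (β ⊕ γ) p (fun S => E₁ (pull Sum.inl S) ∧ E₂ (pull Sum.inr S))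
      = Pm β p E₁ * Pm γ p E₂ := by
  classical
  have hbij : Function.Bijective
      (fun UV : Finset β × Finset γ =>
        UV.1.map ⟨Sum.inl, Sum.inl_injective⟩ ∪ UV.2.map ⟨Sum.inr, Sum.inr_injective⟩) := by
    rw [Fintype.bijective_iff_injective_and_card]
    constructor
    · intro ⟨U, V⟩ ⟨U', V'⟩ h
      simp only [Prod.mk.injEq]
      constructor
      · ext x
        have := congrArg (fun W => Sum.inl x ∈ W) h
        simpa using this
      · ext x
        have := congrArg (fun W => Sum.inr x ∈ W) h
        simpa using this
    · simp [Fintype.card_finset, Fintype.card_sum, pow_add]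
  calc Pm (β ⊕ γ) p (fun S => E₁ (pull Sum.inl S) ∧ E₂ (pull Sum.inr S))
      = ∑ UV : Finset β × Finset γ,
        ((if E₁ UV.1 then p ^ UV.1.card * (1-p) ^ (Fintype.card β - UV.1.card) else 0) *
         (if E₂ UV.2 then p ^ UV.2.card * (1-p) ^ (Fintype.card γ - UV.2.card) else 0) : ℝ) := by
        rw [Pm]
        refine (Fintype.sum_bijective _ hbij _ _ ?_).symm
        rintro ⟨U, V⟩
        simp only
        have hdisj : Disjoint (U.map ⟨Sum.inl, Sum.inl_injective⟩)
            (V.map ⟨Sum.inr, Sum.inr_injective⟩) := by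
          rw [Finset.disjoint_left]
          rintro x hx hx'
          obtain ⟨u, _, rfl⟩ := Finset.mem_map.1 hx
          obtain ⟨v, _, hv⟩ := Finset.mem_map.1 hx'
          exact absurd hv (by simp)
        have hcard : (U.map ⟨Sum.inl, Sum.inl_injective⟩ ∪ V.map ⟨Sum.inr, Sum.inr_injective⟩).card
            = U.card + V.card := by
          rw [Finset.card_union_of_disjoint hdisj, Finset.card_map, Finset.card_map]
        have hpull1 : pull Sum.inl (U.map ⟨Sum.inl, Sum.inl_injective⟩
            ∪ V.map ⟨Sum.inr, Sum.inr_injective⟩) = U := by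
          ext y; simp [mem_pull]
        have hpull2 : pull Sum.inr (U.map ⟨Sum.inl, Sum.inl_injective⟩
            ∪ V.map ⟨Sum.inr, Sum.inr_injective⟩) = V := by
          ext y; simp [mem_pull]
        rw [hpull1, hpull2, hcard]
        have hU : U.card ≤ Fintype.card β := by
          simpa using Finset.card_le_card (Finset.subset_univ U)
        have hV : V.card ≤ Fintype.card γ := by
          simpa using Finset.card_le_card (Finset.subset_univ V)
        have hexp : Fintype.card (β ⊕ γ) - (U.card + V.card)
            = (Fintype.card β - U.card) + (Fintype.card γ - V.card) := by
          rw [Fintype.card_sum]; omega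
        have hexp2 : ((1 - p) ^ (Fintype.card (β ⊕ γ) - (U.card + V.card)) : ℝ)
            = (1 - p) ^ (Fintype.card β - U.card) * (1 - p) ^ (Fintype.card γ - V.card) := by
          rw [hexp, pow_add]
        by_cases h1 : E₁ U <;> by_cases h2 : E₂ V
        · rw [if_pos h1, if_pos h2, if_pos ⟨h1, h2⟩, hexp2]; ring
        · simp [h1, h2]
        · simp [h1, h2]
        · simp [h1, h2]
    _ = Pm β p E₁ * Pm γ p E₂ := by
        rw [Pm, Pm, Finset.sum_mul_sum, ← Finset.univ_product_univ, Finset.sum_product]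

lemma Pm_two_pulls {α β₁ β₂ γ : Type*} [Fintype α] [Fintype β₁] [Fintype β₂] [Fintype γ]
    (e : β₁ ⊕ (β₂ ⊕ γ) ≃ α) (p : ℝ) (E₁ : Finset β₁ → Prop) (E₂ : Finset β₂ → Prop) :
    Pm α p (fun S => E₁ (pull (fun y => e (Sum.inl y)) S)
        ∧ E₂ (pull (fun y => e (Sum.inr (Sum.inl y))) S))
      = Pm β₁ p E₁ * Pm β₂ p E₂ := by
  classical
  rw [Pm_map_equiv e]
  have step1 : Pm (β₁ ⊕ (β₂ ⊕ γ)) p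
      (fun S => E₁ (pull (fun y => e (Sum.inl y)) (S.map e.toEmbedding))
        ∧ E₂ (pull (fun y => e (Sum.inr (Sum.inl y))) (S.map e.toEmbedding)))
      = Pm (β₁ ⊕ (β₂ ⊕ γ)) p
      (fun S => E₁ (pull Sum.inl S) ∧ E₂ (pull Sum.inl (pull Sum.inr S))) := by
    refine Pm_congr p fun S => ?_
    have h1 : pull (fun y => e (Sum.inl y)) (S.map e.toEmbedding) = pull Sum.inl S := by
      ext y; simp [mem_pull]
    have h2 : pull (fun y => e (Sum.inr (Sum.inl y))) (S.map e.toEmbedding)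
        = pull Sum.inl (pull Sum.inr S) := by
      ext y; simp [mem_pull]
    rw [h1, h2]
  rw [step1]
  rw [Pm_sum_split p E₁ (fun W => E₂ (pull Sum.inl W))]
  have step2 : Pm (β₂ ⊕ γ) p (fun W => E₂ (pull Sum.inl W))
      = Pm β₂ p E₂ * Pm γ p (fun _ => True) := by
    rw [← Pm_sum_split p E₂ (fun _ => True)]
    exact Pm_congr p fun W => by tauto
  rw [step2, Pm_true, mul_one]


lemma card_tileIndex (n : ℕ) : Fintype.card (TileIndex n) = (n + 1) * 2 ^ n := by
  classical
  rw [Fintype.card_sigma]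
  have h : ∀ i : Fin (n+1), Fintype.card (Fin (2 ^ (i:ℕ)) × Fin (2 ^ (n - (i:ℕ)))) = 2 ^ n := by
    intro i
    rw [Fintype.card_prod, Fintype.card_fin, Fintype.card_fin, ← pow_add]
    congr 1
    have := i.2
    omega
  rw [Finset.sum_congr rfl (fun i _ => h i), Finset.sum_const, Finset.card_univ,
    Fintype.card_fin, smul_eq_mul]

lemma TileIndex.ext_val {n : ℕ} {x y : TileIndex n} (h1 : (x.1 : ℕ) = (y.1 : ℕ))
    (h2 : (x.2.1 : ℕ) = (y.2.1 : ℕ)) (h3 : (x.2.2 : ℕ) = (y.2.2 : ℕ)) : x = y := by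
  obtain ⟨i, a, b⟩ := x
  obtain ⟨i', a', b'⟩ := y
  have : i = i' := Fin.ext h1
  subst this
  simp only at h2 h3
  have ha : a = a' := Fin.ext h2
  have hb : b = b' := Fin.ext h3
  rw [ha, hb]

/-- index maps for the left/right halves and the full-width leftover tiles -/
def vsplitFun (m : ℕ) : TileIndex m ⊕ (TileIndex m ⊕ Fin (2 ^ (m + 1))) → TileIndex (m + 1)
  | Sum.inl ⟨i, a, b⟩ =>
      ⟨⟨(i : ℕ) + 1, by omega⟩,
        ⟨(a : ℕ), show (a : ℕ) < 2 ^ ((i : ℕ) + 1) from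
          lt_of_lt_of_le a.2 (Nat.pow_le_pow_right (by norm_num) (Nat.le_succ _))⟩,
        ⟨(b : ℕ), show (b : ℕ) < 2 ^ (m + 1 - ((i : ℕ) + 1)) from by
          have := b.2; rw [Nat.succ_sub_succ]; exact this⟩⟩
  | Sum.inr (Sum.inl ⟨i, a, b⟩) =>
      ⟨⟨(i : ℕ) + 1, by omega⟩,
        ⟨2 ^ (i : ℕ) + (a : ℕ), show 2 ^ (i : ℕ) + (a : ℕ) < 2 ^ ((i : ℕ) + 1) from by
          have ha := a.2
          have hp : 2 ^ ((i : ℕ) + 1) = 2 ^ (i : ℕ) + 2 ^ (i : ℕ) := by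
            rw [pow_succ]; ring
          omega⟩,
        ⟨(b : ℕ), show (b : ℕ) < 2 ^ (m + 1 - ((i : ℕ) + 1)) from by
          have := b.2; rw [Nat.succ_sub_succ]; exact this⟩⟩
  | Sum.inr (Sum.inr b) =>
      ⟨⟨0, by omega⟩, ⟨0, show 0 < 2 ^ (0 : ℕ) from by norm_num⟩,
        ⟨(b : ℕ), show (b : ℕ) < 2 ^ (m + 1 - 0) from b.2⟩⟩

lemma vsplit_bijective (m : ℕ) : Function.Bijective (vsplitFun m) := by
  rw [Fintype.bijective_iff_injective_and_card]
  constructor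
  · have val1 : ∀ z, ((vsplitFun m z).1 : ℕ) = match z with
      | Sum.inl ⟨i, _, _⟩ => (i : ℕ) + 1
      | Sum.inr (Sum.inl ⟨i, _, _⟩) => (i : ℕ) + 1
      | Sum.inr (Sum.inr _) => 0 := by
      rintro (⟨i, a, b⟩ | ⟨i, a, b⟩ | b) <;> rfl
    have val2 : ∀ z, ((vsplitFun m z).2.1 : ℕ) = match z with
      | Sum.inl ⟨_, a, _⟩ => (a : ℕ)
      | Sum.inr (Sum.inl ⟨i, a, _⟩) => 2 ^ (i : ℕ) + (a : ℕ)
      | Sum.inr (Sum.inr _) => 0 := by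
      rintro (⟨i, a, b⟩ | ⟨i, a, b⟩ | b) <;> rfl
    have val3 : ∀ z, ((vsplitFun m z).2.2 : ℕ) = match z with
      | Sum.inl ⟨_, _, b⟩ => (b : ℕ)
      | Sum.inr (Sum.inl ⟨_, _, b⟩) => (b : ℕ)
      | Sum.inr (Sum.inr b) => (b : ℕ) := by
      rintro (⟨i, a, b⟩ | ⟨i, a, b⟩ | b) <;> rfl
    rintro z z' h
    have h1 := (val1 z).symm.trans ((congrArg (fun x : TileIndex (m+1) => (x.1 : ℕ)) h).trans (val1 z'))
    have h2 := (val2 z).symm.trans ((congrArg (fun x : TileIndex (m+1) => (x.2.1 : ℕ)) h).trans (val2 z'))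
    have h3 := (val3 z).symm.trans ((congrArg (fun x : TileIndex (m+1) => (x.2.2 : ℕ)) h).trans (val3 z'))
    clear h
    match z, z' with
    | Sum.inl ⟨i, a, b⟩, Sum.inl ⟨i', a', b'⟩ =>
      simp only at h1 h2 h3
      exact congrArg Sum.inl (TileIndex.ext_val (show (i:ℕ) = (i':ℕ) by omega)
        (show (a:ℕ) = (a':ℕ) by omega) (show (b:ℕ) = (b':ℕ) by omega))
    | Sum.inl ⟨i, a, b⟩, Sum.inr (Sum.inl ⟨i', a', b'⟩) =>
      simp only at h1 h2 h3
      exfalso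
      have hii : (i : ℕ) = (i' : ℕ) := by omega
      have ha := a.2
      have hpow : (2:ℕ) ^ (i : ℕ) = 2 ^ (i' : ℕ) := by rw [hii]
      omega
    | Sum.inl ⟨i, a, b⟩, Sum.inr (Sum.inr b') => simp only at h1; exact absurd h1 (by omega)
    | Sum.inr (Sum.inl ⟨i, a, b⟩), Sum.inl ⟨i', a', b'⟩ =>
      simp only at h1 h2 h3
      exfalso
      have hii : (i : ℕ) = (i' : ℕ) := by omega
      have ha := a'.2
      have hpow : (2:ℕ) ^ (i : ℕ) = 2 ^ (i' : ℕ) := by rw [hii]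
      omega
    | Sum.inr (Sum.inl ⟨i, a, b⟩), Sum.inr (Sum.inl ⟨i', a', b'⟩) =>
      simp only at h1 h2 h3
      have hii : (i : ℕ) = (i' : ℕ) := by omega
      have hpow : (2:ℕ) ^ (i : ℕ) = 2 ^ (i' : ℕ) := by rw [hii]
      exact congrArg (Sum.inr ∘ Sum.inl)
        (TileIndex.ext_val (show (i:ℕ) = (i':ℕ) by omega)
          (show (a:ℕ) = (a':ℕ) by omega)
          (show (b:ℕ) = (b':ℕ) by omega))
    | Sum.inr (Sum.inl ⟨i, a, b⟩), Sum.inr (Sum.inr b') => simp only at h1; exact absurd h1 (by omega)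
    | Sum.inr (Sum.inr b), Sum.inl ⟨i', a', b'⟩ => simp only at h1; exact absurd h1 (by omega)
    | Sum.inr (Sum.inr b), Sum.inr (Sum.inl ⟨i', a', b'⟩) => simp only at h1; exact absurd h1 (by omega)
    | Sum.inr (Sum.inr b), Sum.inr (Sum.inr b') =>
      simp only at h3
      exact congrArg (Sum.inr ∘ Sum.inr) (Fin.ext h3)
  · rw [Fintype.card_sum, Fintype.card_sum, Fintype.card_fin, card_tileIndex, card_tileIndex]
    ring

/-- the vertical-split equivalence -/
def vsplitEquiv (m : ℕ) : TileIndex m ⊕ (TileIndex m ⊕ Fin (2 ^ (m + 1))) ≃ TileIndex (m + 1) :=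
  Equiv.ofBijective _ (vsplit_bijective m)

/-- transposition on tile indices -/
def tidxSwap (n : ℕ) : TileIndex n → TileIndex n
  | ⟨i, a, b⟩ =>
      ⟨⟨n - (i : ℕ), by omega⟩, b,
        ⟨(a : ℕ), show (a : ℕ) < 2 ^ (n - (n - (i : ℕ))) from by
          have hi := i.2
          have : n - (n - (i : ℕ)) = (i : ℕ) := by omega
          rw [this]
          exact a.2⟩⟩

lemma tidxSwap_val1 {n : ℕ} (x : TileIndex n) : ((tidxSwap n x).1 : ℕ) = n - (x.1 : ℕ) := by
  obtain ⟨i, a, b⟩ := x; rfl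

lemma tidxSwap_val2 {n : ℕ} (x : TileIndex n) : ((tidxSwap n x).2.1 : ℕ) = (x.2.2 : ℕ) := by
  obtain ⟨i, a, b⟩ := x; rfl

lemma tidxSwap_val3 {n : ℕ} (x : TileIndex n) : ((tidxSwap n x).2.2 : ℕ) = (x.2.1 : ℕ) := by
  obtain ⟨i, a, b⟩ := x; rfl

lemma tidxSwap_invol (n : ℕ) (x : TileIndex n) : tidxSwap n (tidxSwap n x) = x := by
  have hi := x.1.2
  refine TileIndex.ext_val ?_ ?_ ?_
  · rw [tidxSwap_val1, tidxSwap_val1]; omega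
  · rw [tidxSwap_val2, tidxSwap_val3]
  · rw [tidxSwap_val3, tidxSwap_val2]

/-- transposition as an equivalence -/
def tidxSwapEquiv (n : ℕ) : TileIndex n ≃ TileIndex n :=
  ⟨tidxSwap n, tidxSwap n, tidxSwap_invol n, tidxSwap_invol n⟩


/-! ### Geometry helpers -/

lemma DI_subset_unit {i a : ℕ} (ha : a < 2 ^ i) :
    Set.Icc ((a : ℝ) / 2 ^ i) (((a : ℝ) + 1) / 2 ^ i) ⊆ Set.Icc 0 1 := by
  have hp : (0:ℝ) < 2 ^ i := by positivity
  apply Set.Icc_subset_Icc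
  · positivity
  · rw [div_le_one hp]
    have : (a : ℝ) + 1 ≤ 2 ^ i := by
      have : ((a + 1 : ℕ) : ℝ) ≤ ((2 ^ i : ℕ) : ℝ) := Nat.cast_le.2 (by omega)
      push_cast at this
      linarith
    linarith

lemma DI_left {i a : ℕ} (hi : 1 ≤ i) (ha : a + 1 ≤ 2 ^ (i - 1)) :
    Set.Icc ((a : ℝ) / 2 ^ i) (((a : ℝ) + 1) / 2 ^ i) ⊆ Set.Icc 0 (1/2) := by
  have hp : (0:ℝ) < 2 ^ i := by positivity
  apply Set.Icc_subset_Icc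
  · positivity
  · rw [div_le_iff₀ hp]
    have h2 : (2:ℝ) ^ i = 2 * 2 ^ (i - 1) := by
      rw [← pow_succ']
      congr 1
      omega
    have : ((a + 1 : ℕ) : ℝ) ≤ ((2 ^ (i-1) : ℕ) : ℝ) := Nat.cast_le.2 ha
    push_cast at this
    rw [h2]
    linarith

lemma DI_right {i a : ℕ} (ha : 2 ^ (i - 1) ≤ a) (ha' : a < 2 ^ i) :
    Set.Icc ((a : ℝ) / 2 ^ i) (((a : ℝ) + 1) / 2 ^ i) ⊆ Set.Icc (1/2) 1 := by
  have hp : (0:ℝ) < 2 ^ i := by positivity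
  apply Set.Icc_subset_Icc
  · rw [le_div_iff₀ hp]
    have h2 : (2:ℝ) ^ i = 2 * 2 ^ (i - 1) := by
      rw [← pow_succ']
      congr 1
      have : 1 ≤ i := by
        by_contra h
        interval_cases i <;> omega
      omega
    have : ((2 ^ (i-1) : ℕ) : ℝ) ≤ (a : ℝ) := Nat.cast_le.2 ha
    push_cast at this
    rw [h2]
    linarith
  · rw [div_le_one hp]
    have : ((a + 1 : ℕ) : ℝ) ≤ ((2 ^ i : ℕ) : ℝ) := Nat.cast_le.2 (by omega)
    push_cast at this
    linarith

lemma DI_le {i : ℕ} (a : ℕ) : ((a : ℝ)) / 2 ^ i ≤ ((a : ℝ) + 1) / 2 ^ i := by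
  have hp : (0:ℝ) < 2 ^ i := by positivity
  exact (div_le_div_iff_of_pos_right hp).2 (by linarith)

lemma dyadicTile_subset_unit {i j a b : ℕ} (ha : a < 2 ^ i) (hb : b < 2 ^ j) :
    dyadicTile i j a b ⊆ unitSquare :=
  Set.prod_mono (DI_subset_unit ha) (DI_subset_unit hb)

lemma corner_mem_dyadicTile {i j a b : ℕ} :
    (((a : ℝ) + 1) / 2 ^ i, (b : ℝ) / 2 ^ j) ∈ dyadicTile i j a b := by
  have hpi : (0:ℝ) < 2 ^ i := by positivity
  have hpj : (0:ℝ) < 2 ^ j := by positivity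
  exact ⟨⟨DI_le a, le_refl _⟩, le_refl _, DI_le b⟩

lemma interior_dyadicTile (i j a b : ℕ) :
    interior (dyadicTile i j a b)
      = Set.Ioo ((a : ℝ) / 2 ^ i) (((a : ℝ) + 1) / 2 ^ i) ×ˢ
        Set.Ioo ((b : ℝ) / 2 ^ j) (((b : ℝ) + 1) / 2 ^ j) := by
  rw [dyadicTile, interior_prod_eq, interior_Icc, interior_Icc]

/-- image of a dyadic interval under doubling -/
lemma image_double_DI {i a : ℕ} (hi : 1 ≤ i) :
    (fun x : ℝ => 2 * x) '' Set.Icc ((a : ℝ) / 2 ^ i) (((a : ℝ) + 1) / 2 ^ i)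
      = Set.Icc ((a : ℝ) / 2 ^ (i-1)) (((a : ℝ) + 1) / 2 ^ (i-1)) := by
  have hp : (0:ℝ) < 2 ^ i := by positivity
  have h2 : (2:ℝ) ^ i = 2 * 2 ^ (i - 1) := by
    rw [← pow_succ']; congr 1; omega
  have hab : (a : ℝ) / 2 ^ i ≤ ((a : ℝ) + 1) / 2 ^ i := DI_le a
  rw [Set.image_mul_left_Icc (by norm_num) hab]
  have hpp : (0:ℝ) < 2 ^ (i-1) := by positivity
  congr 1 <;> · rw [h2]; field_simp

/-- image of a dyadic interval under `x ↦ 2x - 1` -/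
lemma image_double_sub_DI {i a : ℕ} (hi : 1 ≤ i) (ha : 2 ^ (i-1) ≤ a) :
    (fun x : ℝ => 2 * x - 1) '' Set.Icc ((a : ℝ) / 2 ^ i) (((a : ℝ) + 1) / 2 ^ i)
      = Set.Icc (((a - 2 ^ (i-1) : ℕ) : ℝ) / 2 ^ (i-1))
          ((((a - 2 ^ (i-1) : ℕ) : ℝ) + 1) / 2 ^ (i-1)) := by
  have hp : (0:ℝ) < 2 ^ i := by positivity
  have hpp : (0:ℝ) < 2 ^ (i-1) := by positivity
  have h2 : (2:ℝ) ^ i = 2 * 2 ^ (i - 1) := by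
    rw [← pow_succ']; congr 1; omega
  have hcast : ((a - 2 ^ (i-1) : ℕ) : ℝ) = (a : ℝ) - 2 ^ (i-1) := by
    push_cast [Nat.cast_sub ha]
    ring
  have himg : (fun x : ℝ => 2 * x - 1) = (fun x : ℝ => x + (-1)) ∘ (fun x : ℝ => 2 * x) := by
    funext x; simp; ring
  have hab : (a : ℝ) / 2 ^ i ≤ ((a : ℝ) + 1) / 2 ^ i := DI_le a
  rw [himg, Set.image_comp, Set.image_mul_left_Icc (by norm_num) hab,
    Set.image_add_const_Icc]
  rw [hcast]
  congr 1 <;> · rw [h2]; field_simp; ring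


/-! ### crossing lemma and transport -/

lemma crossing_false {n a b : ℕ} (hn : 0 < n) (ha : a < 2 ^ n) (hb : b < 2 ^ n)
    {F : Set (Set (ℝ × ℝ))}
    (hpw : F.Pairwise fun s t => interior s ∩ interior t = ∅)
    (h1 : dyadicTile 0 n 0 b ∈ F) (h2 : dyadicTile n 0 a 0 ∈ F) : False := by
  have hne : dyadicTile 0 n 0 b ≠ dyadicTile n 0 a 0 := by
    intro h
    have h0 : ((0 : ℝ), (b : ℝ) / 2 ^ n) ∈ dyadicTile 0 n 0 b := by
      constructor
      · constructor
        · norm_num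
        · norm_num
      · exact ⟨le_refl _, DI_le b⟩
    have h1' : ((1 : ℝ), (b : ℝ) / 2 ^ n) ∈ dyadicTile 0 n 0 b := by
      constructor
      · constructor
        · norm_num
        · norm_num
      · exact ⟨le_refl _, DI_le b⟩
    rw [h] at h0 h1'
    have e0 : (a : ℝ) / 2 ^ n ≤ 0 := h0.1.1
    have e1 : (1 : ℝ) ≤ ((a : ℝ) + 1) / 2 ^ n := h1'.1.2
    have hp : (0:ℝ) < 2 ^ n := by positivity
    rw [div_le_iff₀ hp] at e0
    rw [le_div_iff₀ hp] at e1
    have h2n : (2:ℝ) ^ 1 ≤ 2 ^ n := pow_le_pow_right₀ (by norm_num) (by omega)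
    have han : (0:ℝ) ≤ (a : ℝ) := Nat.cast_nonneg a
    have e0' : (a:ℝ) ≤ 0 := by nlinarith
    have h2n' : (2:ℝ) ≤ 2 ^ n := by nlinarith
    nlinarith
  have hdisj := hpw h1 h2 hne
  have hmem : ((2 * (a:ℝ) + 1) / 2 ^ (n+1), (2 * (b:ℝ) + 1) / 2 ^ (n+1))
      ∈ interior (dyadicTile 0 n 0 b) ∩ interior (dyadicTile n 0 a 0) := by
    have hp : (0:ℝ) < 2 ^ n := by positivity
    have hp1 : (0:ℝ) < 2 ^ (n+1) := by positivity
    have hps : (2:ℝ) ^ (n+1) = 2 * 2 ^ n := by rw [pow_succ]; ring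
    have han : ((a:ℕ):ℝ) + 1 ≤ ((2^n : ℕ) : ℝ) := by
      exact_mod_cast Nat.cast_le.2 (by omega : a + 1 ≤ 2 ^ n)
    have hbn : ((b:ℕ):ℝ) + 1 ≤ ((2^n : ℕ) : ℝ) := by
      exact_mod_cast Nat.cast_le.2 (by omega : b + 1 ≤ 2 ^ n)
    push_cast at han hbn
    rw [interior_dyadicTile, interior_dyadicTile]
    constructor
    · constructor
      · constructor
        · norm_num
          positivity
        · norm_num
          rw [div_lt_one hp1, hps]
          nlinarith
      · constructor
        · rw [div_lt_div_iff₀ hp hp1, hps]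
          nlinarith [hp]
        · rw [div_lt_div_iff₀ hp1 hp, hps]
          nlinarith [hp]
    · constructor
      · constructor
        · rw [div_lt_div_iff₀ hp hp1, hps]
          nlinarith [hp]
        · rw [div_lt_div_iff₀ hp1 hp, hps]
          nlinarith [hp]
      · constructor
        · norm_num
          positivity
        · norm_num
          rw [div_lt_one hp1, hps]
          nlinarith
  rw [hdisj] at hmem
  exact hmem

lemma image_prod_map (f g : ℝ → ℝ) (s t : Set ℝ) :
    (fun q : ℝ × ℝ => (f q.1, g q.2)) '' (s ×ˢ t) = (f '' s) ×ˢ (g '' t) := by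
  ext ⟨x, y⟩
  constructor
  · rintro ⟨⟨u, v⟩, ⟨hu, hv⟩, h⟩
    obtain ⟨h1, h2⟩ := Prod.mk.injEq .. ▸ h
    exact ⟨⟨u, hu, by simpa using congrArg Prod.fst h⟩, ⟨v, hv, by simpa using congrArg Prod.snd h⟩⟩
  · rintro ⟨⟨u, hu, rfl⟩, ⟨v, hv, rfl⟩⟩
    exact ⟨(u, v), ⟨hu, hv⟩, rfl⟩

/-- transporting a tiling along a homeomorphism -/
lemma pairwise_image_homeo (e : ℝ × ℝ ≃ₜ ℝ × ℝ) {F : Set (Set (ℝ × ℝ))}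
    (hpw : F.Pairwise fun s t => interior s ∩ interior t = ∅) :
    ((Set.image e) '' F).Pairwise fun s t => interior s ∩ interior t = ∅ := by
  rintro s' ⟨s, hs, rfl⟩ t' ⟨t, ht, rfl⟩ hne
  have hst : s ≠ t := fun h => hne (by rw [h])
  have h := hpw hs ht hst
  rw [← Homeomorph.image_interior, ← Homeomorph.image_interior,
    ← Set.image_inter e.injective, h, Set.image_empty]

lemma sUnion_image_homeo (f : ℝ × ℝ → ℝ × ℝ) (F : Set (Set (ℝ × ℝ))) :
    ⋃₀ ((Set.image f) '' F) = f '' ⋃₀ F := Set.image_sUnion.symm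


/-! ### swap transport and tile classification -/

lemma isDyadicTile_tileOf (n : ℕ) (y : TileIndex n) : IsDyadicTile n (tileOf n y) := by
  obtain ⟨i, a, b⟩ := y
  exact ⟨(i : ℕ), n - (i : ℕ), (a : ℕ), (b : ℕ), by have := i.2; omega, a.2, b.2, rfl⟩

lemma tileOf_swap {n : ℕ} (x : TileIndex n) :
    tileOf n (tidxSwap n x) = Prod.swap '' tileOf n x := by
  obtain ⟨i, a, b⟩ := x
  have hi : (i : ℕ) ≤ n := by have := i.2; omega
  have key : n - (n - (i : ℕ)) = (i : ℕ) := by omega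
  calc tileOf n (tidxSwap n ⟨i, a, b⟩)
      = dyadicTile (n - (i:ℕ)) (n - (n - (i:ℕ))) (b:ℕ) (a:ℕ) := rfl
    _ = dyadicTile (n - (i:ℕ)) (i:ℕ) (b:ℕ) (a:ℕ) := by rw [key]
    _ = Prod.swap '' dyadicTile (i:ℕ) (n - (i:ℕ)) (a:ℕ) (b:ℕ) := by
        rw [dyadicTile, dyadicTile, Set.image_swap_prod]
    _ = Prod.swap '' tileOf n ⟨i, a, b⟩ := rfl

lemma swap_swap_image (t : Set (ℝ × ℝ)) : Prod.swap '' (Prod.swap '' t) = t := by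
  rw [← Set.image_comp, Prod.swap_swap_eq, Set.image_id]

lemma unitSquare_swap : Prod.swap '' unitSquare = unitSquare := by
  rw [unitSquare, Set.image_swap_prod]

lemma prodComm_coe : ⇑(Homeomorph.prodComm ℝ ℝ) = Prod.swap := rfl

/-- transporting a tiling by the transposition -/
lemma isTiling_swap {n : ℕ} {F : Set (Set (ℝ × ℝ))} (hT : IsTiling n F unitSquare) :
    IsTiling n ((Set.image Prod.swap) '' F) unitSquare := by
  obtain ⟨hdy, hun, hpw⟩ := hT
  refine ⟨?_, ?_, ?_⟩
  · rintro t' ⟨t, ht, rfl⟩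
    obtain ⟨i, j, a, b, hij, ha, hb, rfl⟩ := hdy t ht
    exact ⟨j, i, b, a, by omega, hb, ha, by rw [dyadicTile, dyadicTile, Set.image_swap_prod]⟩
  · rw [sUnion_image_homeo, hun, unitSquare_swap]
  · have := pairwise_image_homeo (Homeomorph.prodComm ℝ ℝ) hpw
    rwa [prodComm_coe] at this

lemma tile_left_or_right {m : ℕ} {t : Set (ℝ × ℝ)} (hdy : IsDyadicTile (m+1) t)
    (hnf : ¬ ∃ b, b < 2 ^ (m+1) ∧ t = dyadicTile 0 (m+1) 0 b) :
    t ⊆ Set.Icc (0:ℝ) (1/2) ×ˢ Set.Icc (0:ℝ) 1 ∨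
      t ⊆ Set.Icc (1/2:ℝ) 1 ×ˢ Set.Icc (0:ℝ) 1 := by
  obtain ⟨i, j, a, b, hij, ha, hb, rfl⟩ := hdy
  have hi : 1 ≤ i := by
    rcases Nat.eq_zero_or_pos i with h0 | h; swap
    · exact h
    exfalso
    subst h0
    have ha0 : a = 0 := by simpa using ha
    subst ha0
    have hj : j = m + 1 := by omega
    subst hj
    exact hnf ⟨b, hb, rfl⟩
  rcases le_or_gt (a + 1) (2 ^ (i - 1)) with hL | hR
  · exact Or.inl (Set.prod_mono (DI_left hi hL) (DI_subset_unit hb))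
  · exact Or.inr (Set.prod_mono (DI_right (by omega) ha) (DI_subset_unit hb))

lemma corner_mem_dyadicTile' {i j a b : ℕ} :
    ((a : ℝ) / 2 ^ i, (b : ℝ) / 2 ^ j) ∈ dyadicTile i j a b :=
  ⟨⟨le_refl _, DI_le a⟩, le_refl _, DI_le b⟩

/-- a tile inside the left half comes from a left-embedded index, and doubling
its x-coordinate produces the corresponding order-`m` tile -/
lemma tile_in_left {m : ℕ} (x : TileIndex (m+1))
    (h : tileOf (m+1) x ⊆ Set.Icc (0:ℝ) (1/2) ×ˢ Set.Icc (0:ℝ) 1) :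
    ∃ y : TileIndex m, vsplitFun m (Sum.inl y) = x ∧
      (fun q : ℝ × ℝ => (2 * q.1, q.2)) '' tileOf (m+1) x = tileOf m y := by
  obtain ⟨i, a, b⟩ := x
  have hc := h (corner_mem_dyadicTile (i := (i:ℕ)) (j := m + 1 - (i:ℕ)) (a := (a:ℕ)) (b := (b:ℕ)))
  have hx : ((a:ℝ) + 1) / 2 ^ (i:ℕ) ≤ 1/2 := hc.1.2
  have hp : (0:ℝ) < 2 ^ (i:ℕ) := by positivity
  rw [div_le_div_iff₀ hp (by norm_num)] at hx
  have hnat : 2 * ((a:ℕ) + 1) ≤ 2 ^ (i:ℕ) := by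
    have : (((2 * ((a:ℕ) + 1)) : ℕ) : ℝ) ≤ (((2 ^ (i:ℕ)) : ℕ) : ℝ) := by push_cast; linarith
    exact_mod_cast this
  have hi1 : 1 ≤ (i:ℕ) := by
    rcases Nat.eq_zero_or_pos (i:ℕ) with h0 | h; swap
    · exact h
    exfalso
    have h1 : (2:ℕ) ^ (i:ℕ) = 1 := by rw [h0]; rfl
    omega
  have hpow : 2 ^ (i:ℕ) = 2 * 2 ^ ((i:ℕ) - 1) := by
    rw [← pow_succ']; congr 1; omega
  have haa : (a:ℕ) + 1 ≤ 2 ^ ((i:ℕ) - 1) := by omega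
  have hiv : (i:ℕ) ≤ m + 1 := by have := i.2; omega
  refine ⟨⟨⟨(i:ℕ) - 1, by omega⟩, ⟨(a:ℕ), show (a:ℕ) < 2 ^ ((i:ℕ) - 1) by omega⟩,
    ⟨(b:ℕ), by
      show (b:ℕ) < 2 ^ (m - ((i:ℕ) - 1))
      have he : m - ((i:ℕ) - 1) = m + 1 - (i:ℕ) := by omega
      rw [he]
      exact b.2⟩⟩, ?_, ?_⟩
  · exact TileIndex.ext_val (show ((i:ℕ) - 1) + 1 = (i:ℕ) by omega) rfl rfl
  · show (fun q : ℝ × ℝ => (2 * q.1, q.2)) '' dyadicTile (i:ℕ) (m+1-(i:ℕ)) (a:ℕ) (b:ℕ)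
      = dyadicTile ((i:ℕ) - 1) (m - ((i:ℕ) - 1)) (a:ℕ) (b:ℕ)
    have he : m - ((i:ℕ) - 1) = m + 1 - (i:ℕ) := by omega
    rw [he, dyadicTile, dyadicTile]
    have := image_prod_map (fun x : ℝ => 2 * x) (fun y : ℝ => y)
      (Set.Icc ((a:ℝ) / 2 ^ (i:ℕ)) (((a:ℝ) + 1) / 2 ^ (i:ℕ)))
      (Set.Icc ((b:ℝ) / 2 ^ (m+1-(i:ℕ))) (((b:ℝ) + 1) / 2 ^ (m+1-(i:ℕ))))
    rw [show (fun q : ℝ × ℝ => (2 * q.1, q.2))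
        = (fun q : ℝ × ℝ => ((fun x : ℝ => 2 * x) q.1, (fun y : ℝ => y) q.2)) from rfl, this,
      Set.image_id', image_double_DI hi1]

lemma tile_in_right {m : ℕ} (x : TileIndex (m+1))
    (h : tileOf (m+1) x ⊆ Set.Icc (1/2:ℝ) 1 ×ˢ Set.Icc (0:ℝ) 1) :
    ∃ y : TileIndex m, vsplitFun m (Sum.inr (Sum.inl y)) = x ∧
      (fun q : ℝ × ℝ => (2 * q.1 - 1, q.2)) '' tileOf (m+1) x = tileOf m y := by
  obtain ⟨i, a, b⟩ := x
  have hc := h (corner_mem_dyadicTile' (i := (i:ℕ)) (j := m + 1 - (i:ℕ)) (a := (a:ℕ)) (b := (b:ℕ)))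
  have hx : (1/2 : ℝ) ≤ (a:ℝ) / 2 ^ (i:ℕ) := hc.1.1
  have hp : (0:ℝ) < 2 ^ (i:ℕ) := by positivity
  rw [div_le_div_iff₀ (by norm_num) hp] at hx
  have hnat : 2 ^ (i:ℕ) ≤ 2 * (a:ℕ) := by
    have : (((2 ^ (i:ℕ)) : ℕ) : ℝ) ≤ (((2 * (a:ℕ)) : ℕ) : ℝ) := by push_cast; linarith
    exact_mod_cast this
  have hi1 : 1 ≤ (i:ℕ) := by
    rcases Nat.eq_zero_or_pos (i:ℕ) with h0 | hpos; swap
    · exact hpos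
    exfalso
    have ha := a.2
    have h1 : (2:ℕ) ^ (i:ℕ) = 1 := by rw [h0]; rfl
    omega
  have hpow : 2 ^ (i:ℕ) = 2 * 2 ^ ((i:ℕ) - 1) := by
    rw [← pow_succ']; congr 1; omega
  have haa : 2 ^ ((i:ℕ) - 1) ≤ (a:ℕ) := by omega
  have ha2 := a.2
  have hiv : (i:ℕ) ≤ m + 1 := by have := i.2; omega
  refine ⟨⟨⟨(i:ℕ) - 1, by omega⟩,
    ⟨(a:ℕ) - 2 ^ ((i:ℕ) - 1), show (a:ℕ) - 2 ^ ((i:ℕ) - 1) < 2 ^ ((i:ℕ) - 1) by omega⟩,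
    ⟨(b:ℕ), by
      show (b:ℕ) < 2 ^ (m - ((i:ℕ) - 1))
      have he : m - ((i:ℕ) - 1) = m + 1 - (i:ℕ) := by omega
      rw [he]
      exact b.2⟩⟩, ?_, ?_⟩
  · refine TileIndex.ext_val (show ((i:ℕ) - 1) + 1 = (i:ℕ) by omega) ?_ rfl
    show 2 ^ ((i:ℕ) - 1) + ((a:ℕ) - 2 ^ ((i:ℕ) - 1)) = (a:ℕ)
    omega
  · show (fun q : ℝ × ℝ => (2 * q.1 - 1, q.2)) '' dyadicTile (i:ℕ) (m+1-(i:ℕ)) (a:ℕ) (b:ℕ)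
      = dyadicTile ((i:ℕ) - 1) (m - ((i:ℕ) - 1)) ((a:ℕ) - 2 ^ ((i:ℕ) - 1)) (b:ℕ)
    have he : m - ((i:ℕ) - 1) = m + 1 - (i:ℕ) := by omega
    rw [he, dyadicTile, dyadicTile]
    have := image_prod_map (fun x : ℝ => 2 * x - 1) (fun y : ℝ => y)
      (Set.Icc ((a:ℝ) / 2 ^ (i:ℕ)) (((a:ℝ) + 1) / 2 ^ (i:ℕ)))
      (Set.Icc ((b:ℝ) / 2 ^ (m+1-(i:ℕ))) (((b:ℝ) + 1) / 2 ^ (m+1-(i:ℕ))))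
    rw [show (fun q : ℝ × ℝ => (2 * q.1 - 1, q.2))
        = (fun q : ℝ × ℝ => ((fun x : ℝ => 2 * x - 1) q.1, (fun y : ℝ => y) q.2)) from rfl, this,
      Set.image_id', image_double_sub_DI hi1 haa]


/-! ### the vertical-split construction -/

lemma scaleL_coe : ⇑((Homeomorph.mulLeft₀ (2:ℝ) (by norm_num)).prodCongr (Homeomorph.refl ℝ))
    = fun q : ℝ × ℝ => (2 * q.1, q.2) := rfl

lemma scaleR_coe : ⇑((((Homeomorph.mulLeft₀ (2:ℝ) (by norm_num)).trans
      (Homeomorph.addRight (-1 : ℝ)))).prodCongr (Homeomorph.refl ℝ))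
    = fun q : ℝ × ℝ => (2 * q.1 - 1, q.2) := by
  funext q
  show (2 * q.1 + (-1), q.2) = (2 * q.1 - 1, q.2)
  rw [← sub_eq_add_neg]

lemma image_double_left_half :
    (fun x : ℝ => 2 * x) '' Set.Icc (0:ℝ) (1/2) = Set.Icc (0:ℝ) 1 := by
  rw [Set.image_mul_left_Icc (by norm_num : (0:ℝ) ≤ 2) (by norm_num : (0:ℝ) ≤ 1/2)]
  norm_num

lemma image_double_right_half :
    (fun x : ℝ => 2 * x - 1) '' Set.Icc (1/2 : ℝ) 1 = Set.Icc (0:ℝ) 1 := by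
  have himg : (fun x : ℝ => 2 * x - 1) = (fun x : ℝ => x + (-1)) ∘ (fun x : ℝ => 2 * x) := by
    funext x; simp; ring
  rw [himg, Set.image_comp,
    Set.image_mul_left_Icc (by norm_num : (0:ℝ) ≤ 2) (by norm_num : (1/2:ℝ) ≤ 1),
    Set.image_add_const_Icc]
  norm_num

lemma vertical_case {m : ℕ} {S : Finset (TileIndex (m+1))} {F : Set (Set (ℝ × ℝ))}
    (hFS : ∀ t ∈ F, ∃ x ∈ S, t = tileOf (m+1) x) (hT : IsTiling (m+1) F unitSquare)
    (hnf : ∀ t ∈ F, ¬ ∃ b, b < 2 ^ (m+1) ∧ t = dyadicTile 0 (m+1) 0 b) :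
    TileableSquare m (pull (fun y => vsplitFun m (Sum.inl y)) S) ∧
      TileableSquare m (pull (fun y => vsplitFun m (Sum.inr (Sum.inl y))) S) := by
  obtain ⟨hdy, hun, hpw⟩ := hT
  have hlr : ∀ t ∈ F, t ⊆ Set.Icc (0:ℝ) (1/2) ×ˢ Set.Icc (0:ℝ) 1 ∨
      t ⊆ Set.Icc (1/2:ℝ) 1 ×ˢ Set.Icc (0:ℝ) 1 :=
    fun t ht => tile_left_or_right (hdy t ht) (hnf t ht)
  have hfin : F.Finite := by
    apply Set.Finite.subset ((S : Set (TileIndex (m+1))).toFinite.image (tileOf (m+1)))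
    intro t ht
    obtain ⟨x, hx, rfl⟩ := hFS t ht
    exact ⟨x, hx, rfl⟩
  have hclosed : ∀ t ∈ F, IsClosed t := by
    intro t ht
    obtain ⟨i, j, a, b, _, _, _, rfl⟩ := hdy t ht
    exact (isClosed_Icc).prod isClosed_Icc
  constructor
  -- LEFT HALF
  · set G := {t ∈ F | t ⊆ Set.Icc (0:ℝ) (1/2) ×ˢ Set.Icc (0:ℝ) 1} with hG
    have hGF : G ⊆ F := fun t ht => ht.1
    have hunG : ⋃₀ G = Set.Icc (0:ℝ) (1/2) ×ˢ Set.Icc (0:ℝ) 1 := by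
      apply subset_antisymm
      · exact Set.sUnion_subset fun t ht => ht.2
      · have hcov : Set.Ico (0:ℝ) (1/2) ×ˢ Set.Icc (0:ℝ) 1 ⊆ ⋃₀ G := by
          rintro ⟨x, y⟩ ⟨⟨hx0, hxh⟩, hy⟩
          have hin : ((x, y) : ℝ × ℝ) ∈ unitSquare := ⟨⟨hx0, by linarith⟩, hy⟩
          rw [← hun] at hin
          obtain ⟨t, htF, hmem⟩ := hin
          rcases hlr t htF with hL | hR
          · exact ⟨t, ⟨htF, hL⟩, hmem⟩
          · exact absurd (hR hmem).1.1 (by simp only; linarith)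
        have hcl : IsClosed (⋃₀ G) := by
          rw [Set.sUnion_eq_biUnion]
          exact (hfin.subset hGF).isClosed_biUnion fun t ht => hclosed t (hGF ht)
        calc Set.Icc (0:ℝ) (1/2) ×ˢ Set.Icc (0:ℝ) 1
            = closure (Set.Ico (0:ℝ) (1/2) ×ˢ Set.Icc (0:ℝ) 1) := by
              rw [closure_prod_eq, closure_Ico (by norm_num : (0:ℝ) ≠ 1/2), closure_Icc]
          _ ⊆ closure (⋃₀ G) := closure_mono hcov
          _ = ⋃₀ G := hcl.closure_eq
    refine ⟨(Set.image (fun q : ℝ × ℝ => (2 * q.1, q.2))) '' G, ?_, ?_, ?_, ?_⟩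
    · rintro t' ⟨t, htG, rfl⟩
      obtain ⟨x, hxS, rfl⟩ := hFS t (hGF htG)
      obtain ⟨y, hyx, hyim⟩ := tile_in_left x htG.2
      exact ⟨y, mem_pull.2 (by rw [hyx]; exact hxS), hyim⟩
    · rintro t' ⟨t, htG, rfl⟩
      obtain ⟨x, hxS, rfl⟩ := hFS t (hGF htG)
      obtain ⟨y, hyx, hyim⟩ := tile_in_left x htG.2
      rw [hyim]
      exact isDyadicTile_tileOf m y
    · rw [sUnion_image_homeo, hunG]
      have h1 := image_prod_map (fun x : ℝ => 2 * x) (fun y : ℝ => y)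
        (Set.Icc (0:ℝ) (1/2)) (Set.Icc (0:ℝ) 1)
      rw [show (fun q : ℝ × ℝ => (2 * q.1, q.2))
          = (fun q : ℝ × ℝ => ((fun x : ℝ => 2 * x) q.1, (fun y : ℝ => y) q.2)) from rfl,
        h1, Set.image_id', image_double_left_half]
      rfl
    · have := pairwise_image_homeo
        ((Homeomorph.mulLeft₀ (2:ℝ) (by norm_num)).prodCongr (Homeomorph.refl ℝ))
        (hpw.mono hGF)
      rwa [scaleL_coe] at this
  -- RIGHT HALF
  · set G := {t ∈ F | t ⊆ Set.Icc (1/2:ℝ) 1 ×ˢ Set.Icc (0:ℝ) 1} with hG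
    have hGF : G ⊆ F := fun t ht => ht.1
    have hunG : ⋃₀ G = Set.Icc (1/2:ℝ) 1 ×ˢ Set.Icc (0:ℝ) 1 := by
      apply subset_antisymm
      · exact Set.sUnion_subset fun t ht => ht.2
      · have hcov : Set.Ioc (1/2:ℝ) 1 ×ˢ Set.Icc (0:ℝ) 1 ⊆ ⋃₀ G := by
          rintro ⟨x, y⟩ ⟨⟨hxh, hx1⟩, hy⟩
          have hin : ((x, y) : ℝ × ℝ) ∈ unitSquare := ⟨⟨by linarith, hx1⟩, hy⟩
          rw [← hun] at hin
          obtain ⟨t, htF, hmem⟩ := hin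
          rcases hlr t htF with hL | hR
          · exact absurd (hL hmem).1.2 (by simp only; push_neg; linarith)
          · exact ⟨t, ⟨htF, hR⟩, hmem⟩
        have hcl : IsClosed (⋃₀ G) := by
          rw [Set.sUnion_eq_biUnion]
          exact (hfin.subset hGF).isClosed_biUnion fun t ht => hclosed t (hGF ht)
        calc Set.Icc (1/2:ℝ) 1 ×ˢ Set.Icc (0:ℝ) 1
            = closure (Set.Ioc (1/2:ℝ) 1 ×ˢ Set.Icc (0:ℝ) 1) := by
              rw [closure_prod_eq, closure_Ioc (by norm_num : (1/2:ℝ) ≠ 1), closure_Icc]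
          _ ⊆ closure (⋃₀ G) := closure_mono hcov
          _ = ⋃₀ G := hcl.closure_eq
    refine ⟨(Set.image (fun q : ℝ × ℝ => (2 * q.1 - 1, q.2))) '' G, ?_, ?_, ?_, ?_⟩
    · rintro t' ⟨t, htG, rfl⟩
      obtain ⟨x, hxS, rfl⟩ := hFS t (hGF htG)
      obtain ⟨y, hyx, hyim⟩ := tile_in_right x htG.2
      exact ⟨y, mem_pull.2 (by rw [hyx]; exact hxS), hyim⟩
    · rintro t' ⟨t, htG, rfl⟩
      obtain ⟨x, hxS, rfl⟩ := hFS t (hGF htG)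
      obtain ⟨y, hyx, hyim⟩ := tile_in_right x htG.2
      rw [hyim]
      exact isDyadicTile_tileOf m y
    · rw [sUnion_image_homeo, hunG]
      have h1 := image_prod_map (fun x : ℝ => 2 * x - 1) (fun y : ℝ => y)
        (Set.Icc (1/2:ℝ) 1) (Set.Icc (0:ℝ) 1)
      rw [show (fun q : ℝ × ℝ => (2 * q.1 - 1, q.2))
          = (fun q : ℝ × ℝ => ((fun x : ℝ => 2 * x - 1) q.1, (fun y : ℝ => y) q.2)) from rfl,
        h1, Set.image_id', image_double_right_half]
      rfl
    · have := pairwise_image_homeo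
        ((((Homeomorph.mulLeft₀ (2:ℝ) (by norm_num)).trans
          (Homeomorph.addRight (-1 : ℝ)))).prodCongr (Homeomorph.refl ℝ))
        (hpw.mono hGF)
      rwa [scaleR_coe] at this

/-- the dichotomy: a tiled square splits vertically, either before or after transposing -/
lemma tileable_dichotomy {m : ℕ} {S : Finset (TileIndex (m+1))}
    (h : TileableSquare (m+1) S) :
    (TileableSquare m (pull (fun y => vsplitFun m (Sum.inl y)) S) ∧
      TileableSquare m (pull (fun y => vsplitFun m (Sum.inr (Sum.inl y))) S)) ∨
    (TileableSquare m (pull (fun y => vsplitFun m (Sum.inl y)) (S.image (tidxSwap (m+1)))) ∧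
      TileableSquare m
        (pull (fun y => vsplitFun m (Sum.inr (Sum.inl y))) (S.image (tidxSwap (m+1))))) := by
  classical
  obtain ⟨F, hFS, hT⟩ := h
  by_cases hnf : ∃ t ∈ F, ∃ b, b < 2 ^ (m+1) ∧ t = dyadicTile 0 (m+1) 0 b
  · right
    set F' := (Set.image Prod.swap) '' F with hF'
    have hT' : IsTiling (m+1) F' unitSquare := isTiling_swap hT
    have hFS' : ∀ t ∈ F', ∃ x ∈ S.image (tidxSwap (m+1)), t = tileOf (m+1) x := by
      rintro t' ⟨t, htF, rfl⟩
      obtain ⟨x, hxS, rfl⟩ := hFS t htF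
      exact ⟨tidxSwap (m+1) x, Finset.mem_image_of_mem _ hxS, (tileOf_swap x).symm⟩
    have hnf' : ∀ t ∈ F', ¬ ∃ b, b < 2 ^ (m+1) ∧ t = dyadicTile 0 (m+1) 0 b := by
      rintro t' ⟨t, htF, rfl⟩ ⟨b', hb', hteq⟩
      obtain ⟨t₁, ht₁F, b₁, hb₁, ht₁⟩ := hnf
      have htF2 : dyadicTile (m+1) 0 b' 0 ∈ F := by
        have : t = Prod.swap '' (Prod.swap '' t) := (swap_swap_image t).symm
        rw [hteq] at this
        rw [show dyadicTile 0 (m+1) 0 b' = dyadicTile 0 (m+1) 0 b' from rfl] at this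
        have himg : Prod.swap '' dyadicTile 0 (m+1) 0 b' = dyadicTile (m+1) 0 b' 0 := by
          rw [dyadicTile, dyadicTile, Set.image_swap_prod]
        rw [himg] at this
        rwa [this] at htF
      subst ht₁
      exact crossing_false (by omega) hb' hb₁ hT.2.2 ht₁F htF2
    exact vertical_case hFS' hT' hnf'
  · left
    push_neg at hnf
    exact vertical_case hFS hT fun t ht => by
      intro hex
      obtain ⟨b, hb, ht'⟩ := hex
      exact absurd ht' (by
        have := hnf t ht b hb
        exact this)


/-! ### probability assembly -/

lemma Pr_eq_Pm (n : ℕ) (p : ℝ) (E : Finset (TileIndex n) → Prop) :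
    Pr n p E = Pm (TileIndex n) p E := by
  rw [Pr, Pm, card_tileIndex]

lemma tileable_mono {n : ℕ} {S S' : Finset (TileIndex n)} (h : S ⊆ S') :
    TileableSquare n S → TileableSquare n S' := by
  rintro ⟨F, hFS, hT⟩
  exact ⟨F, fun t ht => (hFS t ht).imp fun x ⟨hx, he⟩ => ⟨h hx, he⟩, hT⟩

lemma T_succ_le {m : ℕ} {p : ℝ} (hp0 : 0 ≤ p) (hp1 : p ≤ 1) :
    T (m+1) p ≤ 2 * (T m p)^2 - (T m p)^4 := by
  classical
  set V : Finset (TileIndex (m+1)) → Prop := fun S =>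
    TileableSquare m (pull (fun y => vsplitFun m (Sum.inl y)) S) ∧
      TileableSquare m (pull (fun y => vsplitFun m (Sum.inr (Sum.inl y))) S) with hV
  set H : Finset (TileIndex (m+1)) → Prop :=
    fun S => V (S.map (tidxSwapEquiv (m+1)).toEmbedding) with hH
  have hVmono : ∀ S T', S ⊆ T' → V S → V T' := fun S T' hsub hS =>
    ⟨tileable_mono (pull_mono _ hsub) hS.1, tileable_mono (pull_mono _ hsub) hS.2⟩
  have hHmono : ∀ S T', S ⊆ T' → H S → H T' := fun S T' hsub hS =>
    hVmono _ _ (Finset.map_subset_map.2 hsub) hS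
  have hdich : ∀ S, TileableSquare (m+1) S → V S ∨ H S := by
    intro S hS
    rcases tileable_dichotomy hS with h | h
    · exact Or.inl h
    · right
      show V (S.map (tidxSwapEquiv (m+1)).toEmbedding)
      have he : S.map (tidxSwapEquiv (m+1)).toEmbedding = S.image (tidxSwap (m+1)) := by
        rw [Finset.map_eq_image]
        rfl
      rw [he]
      exact h
  have hPV : Pm (TileIndex (m+1)) p V = T m p * T m p := by
    rw [T, Pr_eq_Pm]
    exact Pm_two_pulls (vsplitEquiv m) p (TileableSquare m) (TileableSquare m)
  have hPH : Pm (TileIndex (m+1)) p H = Pm (TileIndex (m+1)) p V :=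
    (Pm_map_equiv (tidxSwapEquiv (m+1)) p V).symm
  have h1 : T (m+1) p ≤ Pm (TileIndex (m+1)) p (fun S => V S ∨ H S) := by
    rw [T, Pr_eq_Pm]
    exact Pm_mono hp0 hp1 hdich
  have h2 := Pm_union p V H
  have h3 := Pm_harris hp0 hp1 hVmono hHmono
  rw [hPH] at h2 h3
  rw [hPV] at h2 h3
  nlinarith [h1, h2, h3]

/-! ### base cases -/

lemma sum_two_subsets {α : Type*} [Fintype α] (h1 : Fintype.card α = 1) (f : Finset α → ℝ) :
    ∑ S : Finset α, f S = f ∅ + f Finset.univ := by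
  classical
  have hne : (∅ : Finset α) ≠ Finset.univ := by
    intro h
    have : Fintype.card α = 0 := by rw [← Finset.card_univ, ← h]; rfl
    omega
  have huniv : (Finset.univ : Finset (Finset α)) = {∅, Finset.univ} := by
    ext S
    simp only [Finset.mem_univ, true_iff, Finset.mem_insert, Finset.mem_singleton]
    rcases S.eq_empty_or_nonempty with h | h
    · exact Or.inl h
    · right
      apply Finset.eq_univ_of_card
      have h1' : 1 ≤ S.card := Finset.card_pos.2 h
      have h2' : S.card ≤ 1 := by
        have := Finset.card_le_univ S
        rwa [h1] at this
      omega
  rw [huniv, Finset.sum_insert (by simpa using hne), Finset.sum_singleton]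

lemma dyadicTile_zero : dyadicTile 0 0 0 0 = unitSquare := by
  rw [dyadicTile, unitSquare]
  norm_num

lemma tileable_zero_univ : TileableSquare 0 (Finset.univ : Finset (TileIndex 0)) := by
  refine ⟨{unitSquare}, ?_, ?_, ?_, ?_⟩
  · intro t ht
    rw [Set.mem_singleton_iff] at ht
    subst ht
    exact ⟨⟨⟨0, by omega⟩, ⟨0, by norm_num⟩, ⟨0, by norm_num⟩⟩, Finset.mem_univ _,
      dyadicTile_zero.symm⟩
  · intro t ht
    rw [Set.mem_singleton_iff] at ht
    subst ht
    exact ⟨0, 0, 0, 0, rfl, by norm_num, by norm_num, dyadicTile_zero.symm⟩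
  · exact Set.sUnion_singleton _
  · exact Set.pairwise_singleton _ _

lemma not_tileable_zero_empty : ¬ TileableSquare 0 (∅ : Finset (TileIndex 0)) := by
  rintro ⟨F, hFS, hdy, hun, hpw⟩
  have h00 : ((0:ℝ), (0:ℝ)) ∈ unitSquare := ⟨⟨le_refl 0, zero_le_one⟩, le_refl 0, zero_le_one⟩
  rw [← hun] at h00
  obtain ⟨t, htF, _⟩ := h00
  obtain ⟨x, hx, _⟩ := hFS t htF
  exact absurd hx (Finset.notMem_empty x)

open Classical in
lemma T_zero (p : ℝ) : T 0 p = p := by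
  rw [T, Pr, sum_two_subsets (by rw [card_tileIndex]; norm_num)]
  rw [if_neg not_tileable_zero_empty, if_pos tileable_zero_univ]
  rw [Finset.card_univ, card_tileIndex]
  norm_num

lemma tileable_univ (n : ℕ) : TileableSquare n (Finset.univ : Finset (TileIndex n)) := by
  refine ⟨{t | ∃ b, b < 2^n ∧ t = dyadicTile 0 n 0 b}, ?_, ?_, ?_, ?_⟩
  · rintro t ⟨b, hb, rfl⟩
    exact ⟨⟨⟨0, by omega⟩, ⟨0, by norm_num⟩, ⟨b, hb⟩⟩, Finset.mem_univ _, rfl⟩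
  · rintro t ⟨b, hb, rfl⟩
    exact ⟨0, n, 0, b, by omega, by norm_num, hb, rfl⟩
  · apply subset_antisymm
    · apply Set.sUnion_subset
      rintro t ⟨b, hb, rfl⟩
      exact dyadicTile_subset_unit (by norm_num) hb
    · rintro ⟨x, y⟩ ⟨⟨hx0, hx1⟩, hy0, hy1⟩
      have hp : (0:ℝ) < 2^n := by positivity
      have hxmem : x ∈ Set.Icc (((0:ℕ):ℝ) / 2 ^ 0) ((((0:ℕ):ℝ) + 1) / 2 ^ 0) := by
        constructor <;> norm_num [hx0, hx1]
      by_cases hy : y = 1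
      · subst hy
        have hbn : 1 ≤ 2^n := Nat.one_le_two_pow
        refine ⟨dyadicTile 0 n 0 (2^n - 1), ⟨2^n - 1, by omega, rfl⟩, hxmem, ?_, ?_⟩
        · show ((2^n - 1 : ℕ) : ℝ) / 2^n ≤ 1
          rw [div_le_one hp]
          have h1' : ((2^n - 1 : ℕ) : ℝ) ≤ ((2^n : ℕ) : ℝ) := Nat.cast_le.2 (by omega)
          have h2' : ((2^n : ℕ) : ℝ) = 2^n := by push_cast; ring
          linarith
        · show (1:ℝ) ≤ (((2^n - 1 : ℕ) : ℝ) + 1) / 2^n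
          rw [le_div_iff₀ hp]
          have h2' : (((2^n - 1 : ℕ) : ℝ) + 1) = ((2^n : ℕ):ℝ) := by
            rw [← Nat.cast_one (R := ℝ), ← Nat.cast_add]
            exact congrArg _ (by omega)
          have h3' : ((2^n : ℕ) : ℝ) = 2^n := by push_cast; ring
          linarith
      · set b := ⌊y * 2^n⌋₊ with hbdef
        have hynn : 0 ≤ y * 2^n := by positivity
        have hblt : b < 2^n := by
          rw [hbdef, Nat.floor_lt hynn]
          have : y < 1 := lt_of_le_of_ne hy1 hy
          push_cast
          nlinarith
        refine ⟨dyadicTile 0 n 0 b, ⟨b, hblt, rfl⟩, hxmem, ?_, ?_⟩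
        · show (b : ℝ) / 2^n ≤ y
          rw [div_le_iff₀ hp]
          exact Nat.floor_le hynn
        · show y ≤ ((b : ℝ) + 1) / 2^n
          rw [le_div_iff₀ hp]
          exact le_of_lt (Nat.lt_floor_add_one _)
  · rintro s ⟨b₁, hb₁, rfl⟩ t ⟨b₂, hb₂, rfl⟩ hne
    have hbne : b₁ ≠ b₂ := fun h => hne (by rw [h])
    rw [interior_dyadicTile, interior_dyadicTile, Set.prod_inter_prod]
    have hp : (0:ℝ) < 2^n := by positivity
    have key : Set.Ioo ((b₁:ℝ)/2^n) (((b₁:ℝ)+1)/2^n)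
        ∩ Set.Ioo ((b₂:ℝ)/2^n) (((b₂:ℝ)+1)/2^n) = ∅ := by
      ext z
      simp only [Set.mem_inter_iff, Set.mem_Ioo, Set.mem_empty_iff_false, iff_false, not_and,
        and_imp]
      intro h1 h2 h3
      rcases lt_or_gt_of_ne hbne with h | h
      · have hc : ((b₁:ℝ)+1) ≤ (b₂:ℝ) := by
          have : b₁ + 1 ≤ b₂ := h
          exact_mod_cast this
        have := (div_le_div_iff_of_pos_right hp).2 hc
        linarith
      · have hc : ((b₂:ℝ)+1) ≤ (b₁:ℝ) := by
          have : b₂ + 1 ≤ b₁ := h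
          exact_mod_cast this
        have := (div_le_div_iff_of_pos_right hp).2 hc
        intro h4
        linarith
    rw [key, Set.prod_empty]

open Classical in
lemma T_one (n : ℕ) : T n 1 = 1 := by
  rw [T, Pr]
  rw [Finset.sum_eq_single Finset.univ]
  · rw [if_pos (tileable_univ n), Finset.card_univ, card_tileIndex]
    norm_num
  · intro S _ hSne
    have hlt : S.card < (n+1) * 2^n := by
      have hss : S ⊂ Finset.univ := Finset.ssubset_univ_iff.2 hSne
      have := Finset.card_lt_card hss
      rwa [Finset.card_univ, card_tileIndex] at this
    have hz : ((1:ℝ) - 1) ^ ((n+1)*2^n - S.card) = 0 := by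
      rw [show (1:ℝ) - 1 = 0 from by norm_num]
      exact zero_pow (by omega)
    split_ifs with hE
    · rw [hz, mul_zero]
    · rfl
  · intro h
    exact absurd (Finset.mem_univ _) h

/-- `p_c ≥ (√5 - 1)/2`. -/
theorem pc_ge_golden : (Real.sqrt 5 - 1) / 2 ≤ pc := by
  have h5 : Real.sqrt 5 ^ 2 = 5 := Real.sq_sqrt (by norm_num)
  have h5n : (0:ℝ) ≤ Real.sqrt 5 := Real.sqrt_nonneg 5
  have hmem1 : (1:ℝ) ∈ {p : ℝ | p ∈ Set.Icc (0:ℝ) 1 ∧ Tendsto (fun n => T n p) atTop (𝓝 1)} := by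
    refine ⟨⟨zero_le_one, le_refl 1⟩, ?_⟩
    have he : (fun n => T n 1) = fun _ => (1:ℝ) := funext T_one
    rw [he]
    exact tendsto_const_nhds
  rw [pc]
  refine le_csInf ⟨1, hmem1⟩ ?_
  rintro p ⟨⟨hp0, hp1⟩, hlim⟩
  by_contra hlt
  push_neg at hlt
  have hgp : p^2 + p ≤ 1 := by nlinarith
  have hinv : ∀ n, T n p ≤ p := by
    intro n
    induction n with
    | zero => rw [T_zero]
    | succ m ih =>
      have h0 : 0 ≤ T m p := by
        rw [T, Pr_eq_Pm]
        exact Pm_nonneg hp0 hp1 _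
      have hstep := T_succ_le (m := m) hp0 hp1
      have key : 2 * (T m p)^2 - (T m p)^4 ≤ p := by
        nlinarith [mul_nonneg (mul_nonneg (sub_nonneg.2 ih) (by linarith : (0:ℝ) ≤ p + T m p))
            (by nlinarith : (0:ℝ) ≤ 2 - p^2 - (T m p)^2),
          mul_nonneg (mul_nonneg hp0 (by linarith : (0:ℝ) ≤ 1 - p))
            (by nlinarith : (0:ℝ) ≤ 1 - p - p^2)]
      linarith
  have h1p : (1:ℝ) ≤ p := le_of_tendsto hlim (Filter.Eventually.of_forall hinv)
  nlinarith

end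
end

section
/- Fix a designation of each dyadic tile of order n as available or unavailable. Then a dyadic tile of order k < n is blocked if and only if at least one of its two horizontal children is blocked and at least one of its two vertical children is blocked. -/
open Set Filter Topology

noncomputable section

/-- Given the set `avail` of available order-`n` tiles, a tile (of order `≤ n`) is blocked
if it cannot be tiled by available order-`n` tiles. -/
def Blocked (n : ℕ) (avail : Set (Set (ℝ × ℝ))) (t : Set (ℝ × ℝ)) : Prop :=
  ¬ ∃ F : Set (Set (ℝ × ℝ)), F ⊆ avail ∧ IsTiling n F t

/-! ### auxiliary 1D development -/

def dI (i a : ℕ) : Set ℝ := Set.Icc ((a : ℝ) / 2 ^ i) (((a : ℝ) + 1) / 2 ^ i)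

lemma dyadicTile_def (i j a b : ℕ) : dyadicTile i j a b = dI i a ×ˢ dI j b := rfl

lemma dI_closure (i a : ℕ) : closure (dI i a) = dI i a := isClosed_Icc.closure_eq

lemma dI_lo_lt_hi (i a : ℕ) : (a : ℝ) / 2 ^ i < ((a : ℝ) + 1) / 2 ^ i :=
  div_lt_div_of_pos_right (by linarith) (by positivity)

lemma dI_nonempty (i a : ℕ) : (dI i a).Nonempty :=
  Set.nonempty_Icc.mpr (dI_lo_lt_hi i a).le

lemma dI_subset_iff {i' a' i a : ℕ} :
    dI i' a' ⊆ dI i a ↔ a * 2 ^ i' ≤ a' * 2 ^ i ∧ (a' + 1) * 2 ^ i ≤ (a + 1) * 2 ^ i' := by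
  rw [dI, dI, Set.Icc_subset_Icc_iff (dI_lo_lt_hi i' a').le,
    div_le_div_iff₀ (by positivity) (by positivity),
    div_le_div_iff₀ (by positivity) (by positivity)]
  exact_mod_cast Iff.rfl

lemma dI_level_le {i' a' i a : ℕ} (h : dI i' a' ⊆ dI i a) : i ≤ i' := by
  rw [dI_subset_iff] at h
  obtain ⟨h1, h2⟩ := h
  have : (2:ℕ) ^ i ≤ 2 ^ i' := by
    rw [add_mul, one_mul, add_mul, one_mul] at h2
    omega
  exact (Nat.pow_le_pow_iff_right (by norm_num)).mp this

lemma dI_eq_of_subset_same {i a' a : ℕ} (h : dI i a' ⊆ dI i a) : a' = a := by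
  rw [dI_subset_iff] at h
  have h2 : (0:ℕ) < 2 ^ i := Nat.pow_pos (by norm_num)
  obtain ⟨h1, h3⟩ := h
  have := Nat.le_of_mul_le_mul_right h1 h2
  have := Nat.le_of_mul_le_mul_right h3 h2
  omega

lemma dI_subset_iff' {i d a' a : ℕ} :
    dI (i + d) a' ⊆ dI i a ↔ a * 2 ^ d ≤ a' ∧ a' + 1 ≤ (a + 1) * 2 ^ d := by
  rw [dI_subset_iff, pow_add]
  have h2 : (0:ℕ) < 2 ^ i := Nat.pow_pos (by norm_num)
  constructor
  · rintro ⟨h1, h3⟩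
    refine ⟨Nat.le_of_mul_le_mul_right ?_ h2, Nat.le_of_mul_le_mul_right ?_ h2⟩
    · calc a * 2 ^ d * 2 ^ i = a * (2 ^ i * 2 ^ d) := by ring
        _ ≤ a' * 2 ^ i := h1
    · calc (a' + 1) * 2 ^ i ≤ (a + 1) * (2 ^ i * 2 ^ d) := h3
        _ = (a + 1) * 2 ^ d * 2 ^ i := by ring
  · rintro ⟨h1, h3⟩
    constructor
    · calc a * (2 ^ i * 2 ^ d) = a * 2 ^ d * 2 ^ i := by ring
        _ ≤ a' * 2 ^ i := Nat.mul_le_mul_right _ h1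
    · calc (a' + 1) * 2 ^ i ≤ (a + 1) * 2 ^ d * 2 ^ i := Nat.mul_le_mul_right _ h3
        _ = (a + 1) * (2 ^ i * 2 ^ d) := by ring

lemma dI_dichotomy {i' a' i a : ℕ} (h : dI i' a' ⊆ dI i a) (hi : i < i') :
    dI i' a' ⊆ dI (i + 1) (2 * a) ∨ dI i' a' ⊆ dI (i + 1) (2 * a + 1) := by
  obtain ⟨d, rfl⟩ : ∃ d, i' = (i + 1) + d := ⟨i' - (i + 1), by omega⟩
  rw [show (i + 1) + d = i + (d + 1) by ring, dI_subset_iff'] at h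
  rw [dI_subset_iff', dI_subset_iff']
  obtain ⟨h1, h2⟩ := h
  rw [pow_succ] at h1 h2
  by_cases hc : a' + 1 ≤ (2 * a + 1) * 2 ^ d
  · left
    refine ⟨?_, hc⟩
    calc 2 * a * 2 ^ d = a * (2 ^ d * 2) := by ring
      _ ≤ a' := h1
  · right
    constructor
    · omega
    · calc a' + 1 ≤ (a + 1) * (2 ^ d * 2) := h2
        _ = (2 * a + 1 + 1) * 2 ^ d := by ring

lemma dI_union (i a : ℕ) :
    dI (i + 1) (2 * a) ∪ dI (i + 1) (2 * a + 1) = dI i a := by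
  unfold dI
  push_cast
  rw [show ((2:ℝ) * a) / 2 ^ (i + 1) = a / 2 ^ i by rw [pow_succ]; ring,
      show ((2:ℝ) * a + 1 + 1) / 2 ^ (i + 1) = (a + 1) / 2 ^ i by rw [pow_succ]; ring]
  refine Set.Icc_union_Icc_eq_Icc ?_ ?_
  · rw [pow_succ, div_le_div_iff₀ (by positivity) (by positivity)]
    have : (0:ℝ) < 2 ^ i := by positivity
    nlinarith
  · rw [pow_succ, div_le_div_iff₀ (by positivity) (by positivity)]
    have : (0:ℝ) < 2 ^ i := by positivity
    nlinarith

lemma dI_child_subset_l (i a : ℕ) : dI (i + 1) (2 * a) ⊆ dI i a :=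
  dI_union i a ▸ Set.subset_union_left

lemma dI_child_subset_r (i a : ℕ) : dI (i + 1) (2 * a + 1) ⊆ dI i a :=
  dI_union i a ▸ Set.subset_union_right

lemma dI_Ioo_subset {i' a' i a : ℕ} (h : dI i' a' ⊆ dI i a) :
    Ioo ((a' : ℝ) / 2 ^ i') (((a' : ℝ) + 1) / 2 ^ i') ⊆
      Ioo ((a : ℝ) / 2 ^ i) (((a : ℝ) + 1) / 2 ^ i) := by
  rw [dI, dI, Set.Icc_subset_Icc_iff (dI_lo_lt_hi i' a').le] at h
  exact Set.Ioo_subset_Ioo h.1 h.2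

lemma dI_mid_mem (i a : ℕ) :
    ((a : ℝ) / 2 ^ i + ((a : ℝ) + 1) / 2 ^ i) / 2 ∈
      Ioo ((a : ℝ) / 2 ^ i) (((a : ℝ) + 1) / 2 ^ i) := by
  have := dI_lo_lt_hi i a
  constructor <;> [linarith; linarith]

lemma interior_prod_Icc {i j a b : ℕ} :
    interior (dI i a ×ˢ dI j b) =
      Ioo ((a : ℝ) / 2 ^ i) (((a : ℝ) + 1) / 2 ^ i) ×ˢ
        Ioo ((b : ℝ) / 2 ^ j) (((b : ℝ) + 1) / 2 ^ j) := by
  rw [interior_prod_eq, dI, dI, interior_Icc, interior_Icc]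

lemma prod_dI_subset {i' j' a' b' i j a b : ℕ}
    (h : dI i' a' ×ˢ dI j' b' ⊆ dI i a ×ˢ dI j b) :
    dI i' a' ⊆ dI i a ∧ dI j' b' ⊆ dI j b := by
  obtain ⟨y, hy⟩ := dI_nonempty j' b'
  obtain ⟨x, hx⟩ := dI_nonempty i' a'
  exact ⟨fun z hz => (h (Set.mk_mem_prod hz hy)).1,
         fun z hz => (h (Set.mk_mem_prod hx hz)).2⟩

/-! ### finiteness -/

lemma tiling_finite {n : ℕ} {F : Set (Set (ℝ × ℝ))} (h : ∀ t ∈ F, IsDyadicTile n t) :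
    F.Finite := by
  have hsub : F ⊆ (fun q : (ℕ × ℕ) × ℕ × ℕ => dyadicTile q.1.1 q.1.2 q.2.1 q.2.2) ''
      ((Set.Iic n ×ˢ Set.Iic n) ×ˢ (Set.Iic (2 ^ n) ×ˢ Set.Iic (2 ^ n))) := by
    intro t ht
    obtain ⟨i, j, a, b, hij, ha, hb, rfl⟩ := h t ht
    refine ⟨((i, j), (a, b)), ?_, rfl⟩
    simp only [Set.mem_prod, Set.mem_Iic]
    refine ⟨⟨by omega, by omega⟩, ?_, ?_⟩
    · exact le_trans ha.le (Nat.pow_le_pow_right (by norm_num) (by omega))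
    · exact le_trans hb.le (Nat.pow_le_pow_right (by norm_num) (by omega))
  exact Set.Finite.subset (Set.Finite.image _
    (((Set.finite_Iic n).prod (Set.finite_Iic n)).prod
      ((Set.finite_Iic (2 ^ n)).prod (Set.finite_Iic (2 ^ n))))) hsub

lemma tile_isClosed {n : ℕ} {t : Set (ℝ × ℝ)} (h : IsDyadicTile n t) : IsClosed t := by
  obtain ⟨i, j, a, b, _, _, _, rfl⟩ := h
  exact IsClosed.prod isClosed_Icc isClosed_Icc

/-! ### restricting a tiling to a sub-rectangle -/

lemma tiling_restrict {n : ℕ} {F : Set (Set (ℝ × ℝ))} {R C S : Set (ℝ × ℝ)}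
    (hT : IsTiling n F R) (hCR : C ⊆ R)
    (hcl : C ⊆ closure (C ∩ S))
    (hS : ∀ T ∈ F, (T ∩ S).Nonempty → T ⊆ C) :
    IsTiling n {T | T ∈ F ∧ T ⊆ C} C := by
  obtain ⟨htile, huni, hpw⟩ := hT
  have hfin : F.Finite := tiling_finite htile
  refine ⟨fun t ht => htile t ht.1, ?_, hpw.mono (fun t ht => ht.1)⟩
  apply Set.Subset.antisymm
  · exact Set.sUnion_subset fun t ht => ht.2
  · have h1 : C ∩ S ⊆ ⋃₀ {T | T ∈ F ∧ T ⊆ C} := by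
      rintro p ⟨hpC, hpS⟩
      have : p ∈ ⋃₀ F := huni.symm ▸ hCR hpC
      obtain ⟨T, hTF, hpT⟩ := this
      exact ⟨T, ⟨hTF, hS T hTF ⟨p, hpT, hpS⟩⟩, hpT⟩
    have hclosed : IsClosed (⋃₀ {T | T ∈ F ∧ T ⊆ C}) := by
      rw [Set.sUnion_eq_biUnion]
      exact Set.Finite.isClosed_biUnion (hfin.subset (fun t ht => ht.1))
        (fun t ht => tile_isClosed (htile t ht.1))
    calc C ⊆ closure (C ∩ S) := hcl
      _ ⊆ closure (⋃₀ {T | T ∈ F ∧ T ⊆ C}) := closure_mono h1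
      _ = ⋃₀ {T | T ∈ F ∧ T ⊆ C} := hclosed.closure_eq

/-! ### splitting a tiling along the middle lines -/

lemma Icc_inter_Iio' {lo m : ℝ} : Icc lo m ∩ Iio m = Ico lo m := by
  ext y
  simp only [Set.mem_inter_iff, Set.mem_Icc, Set.mem_Iio, Set.mem_Ico]
  exact ⟨fun ⟨⟨h1, _⟩, h2⟩ => ⟨h1, h2⟩, fun ⟨h1, h2⟩ => ⟨⟨h1, h2.le⟩, h2⟩⟩

lemma Icc_inter_Ioi' {m hi : ℝ} : Icc m hi ∩ Ioi m = Ioc m hi := by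
  ext y
  simp only [Set.mem_inter_iff, Set.mem_Icc, Set.mem_Ioi, Set.mem_Ioc]
  exact ⟨fun ⟨⟨_, h1⟩, h2⟩ => ⟨h2, h1⟩, fun ⟨h1, h2⟩ => ⟨⟨h1.le, h2⟩, h1⟩⟩

lemma tiling_split_h {n i j a b : ℕ} {F : Set (Set (ℝ × ℝ))}
    (hT : IsTiling n F (dyadicTile i j a b))
    (hall : ∀ T ∈ F, T ⊆ dyadicTile i (j + 1) a (2 * b) ∨
      T ⊆ dyadicTile i (j + 1) a (2 * b + 1)) :
    IsTiling n {T | T ∈ F ∧ T ⊆ dyadicTile i (j + 1) a (2 * b)}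
      (dyadicTile i (j + 1) a (2 * b)) ∧
    IsTiling n {T | T ∈ F ∧ T ⊆ dyadicTile i (j + 1) a (2 * b + 1)}
      (dyadicTile i (j + 1) a (2 * b + 1)) := by
  have hmid : ((↑(2 * b) : ℝ) + 1) / 2 ^ (j + 1) = (↑(2 * b + 1) : ℝ) / 2 ^ (j + 1) := by
    push_cast; ring
  constructor
  · refine tiling_restrict (S := univ ×ˢ Iio (((↑(2 * b) : ℝ) + 1) / 2 ^ (j + 1))) hT ?_ ?_ ?_
    · rw [dyadicTile_def, dyadicTile_def]
      exact Set.prod_mono_right (dI_child_subset_l j b)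
    · have hC : dyadicTile i (j + 1) a (2 * b) ∩
          (univ ×ˢ Iio (((↑(2 * b) : ℝ) + 1) / 2 ^ (j + 1))) =
          dI i a ×ˢ Ico ((↑(2 * b) : ℝ) / 2 ^ (j + 1)) (((↑(2 * b) : ℝ) + 1) / 2 ^ (j + 1)) := by
        rw [dyadicTile_def, Set.prod_inter_prod, Set.inter_univ]
        congr 1
        exact Icc_inter_Iio'
      rw [hC, closure_prod_eq, closure_Ico (dI_lo_lt_hi (j + 1) (2 * b)).ne, dI_closure]
      exact subset_refl _
    · intro T hTF hne
      rcases hall T hTF with h | h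
      · exact h
      · exfalso
        obtain ⟨p, hpT, hpS⟩ := hne
        have h1 : (↑(2 * b + 1) : ℝ) / 2 ^ (j + 1) ≤ p.2 := ((h hpT).2).1
        have h2 : p.2 < ((↑(2 * b) : ℝ) + 1) / 2 ^ (j + 1) := hpS.2
        rw [hmid] at h2
        linarith
  · refine tiling_restrict (S := univ ×ˢ Ioi ((↑(2 * b + 1) : ℝ) / 2 ^ (j + 1))) hT ?_ ?_ ?_
    · rw [dyadicTile_def, dyadicTile_def]
      exact Set.prod_mono_right (dI_child_subset_r j b)
    · have hC : dyadicTile i (j + 1) a (2 * b + 1) ∩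
          (univ ×ˢ Ioi ((↑(2 * b + 1) : ℝ) / 2 ^ (j + 1))) =
          dI i a ×ˢ Ioc ((↑(2 * b + 1) : ℝ) / 2 ^ (j + 1)) (((↑(2 * b + 1) : ℝ) + 1) / 2 ^ (j + 1)) := by
        rw [dyadicTile_def, Set.prod_inter_prod, Set.inter_univ]
        congr 1
        exact Icc_inter_Ioi'
      rw [hC, closure_prod_eq, closure_Ioc (dI_lo_lt_hi (j + 1) (2 * b + 1)).ne, dI_closure]
      exact subset_refl _
    · intro T hTF hne
      rcases hall T hTF with h | h
      · exfalso
        obtain ⟨p, hpT, hpS⟩ := hne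
        have h1 : p.2 ≤ ((↑(2 * b) : ℝ) + 1) / 2 ^ (j + 1) := ((h hpT).2).2
        have h2 : (↑(2 * b + 1) : ℝ) / 2 ^ (j + 1) < p.2 := hpS.2
        rw [hmid] at h1
        linarith
      · exact h

lemma tiling_split_v {n i j a b : ℕ} {F : Set (Set (ℝ × ℝ))}
    (hT : IsTiling n F (dyadicTile i j a b))
    (hall : ∀ T ∈ F, T ⊆ dyadicTile (i + 1) j (2 * a) b ∨
      T ⊆ dyadicTile (i + 1) j (2 * a + 1) b) :
    IsTiling n {T | T ∈ F ∧ T ⊆ dyadicTile (i + 1) j (2 * a) b}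
      (dyadicTile (i + 1) j (2 * a) b) ∧
    IsTiling n {T | T ∈ F ∧ T ⊆ dyadicTile (i + 1) j (2 * a + 1) b}
      (dyadicTile (i + 1) j (2 * a + 1) b) := by
  have hmid : ((↑(2 * a) : ℝ) + 1) / 2 ^ (i + 1) = (↑(2 * a + 1) : ℝ) / 2 ^ (i + 1) := by
    push_cast; ring
  constructor
  · refine tiling_restrict (S := Iio (((↑(2 * a) : ℝ) + 1) / 2 ^ (i + 1)) ×ˢ univ) hT ?_ ?_ ?_
    · rw [dyadicTile_def, dyadicTile_def]
      exact Set.prod_mono_left (dI_child_subset_l i a)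
    · have hC : dyadicTile (i + 1) j (2 * a) b ∩
          (Iio (((↑(2 * a) : ℝ) + 1) / 2 ^ (i + 1)) ×ˢ univ) =
          Ico ((↑(2 * a) : ℝ) / 2 ^ (i + 1)) (((↑(2 * a) : ℝ) + 1) / 2 ^ (i + 1)) ×ˢ dI j b := by
        rw [dyadicTile_def, Set.prod_inter_prod, Set.inter_univ]
        congr 1
        exact Icc_inter_Iio'
      rw [hC, closure_prod_eq, closure_Ico (dI_lo_lt_hi (i + 1) (2 * a)).ne, dI_closure]
      exact subset_refl _
    · intro T hTF hne
      rcases hall T hTF with h | h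
      · exact h
      · exfalso
        obtain ⟨p, hpT, hpS⟩ := hne
        have h1 : (↑(2 * a + 1) : ℝ) / 2 ^ (i + 1) ≤ p.1 := ((h hpT).1).1
        have h2 : p.1 < ((↑(2 * a) : ℝ) + 1) / 2 ^ (i + 1) := hpS.1
        rw [hmid] at h2
        linarith
  · refine tiling_restrict (S := Ioi ((↑(2 * a + 1) : ℝ) / 2 ^ (i + 1)) ×ˢ univ) hT ?_ ?_ ?_
    · rw [dyadicTile_def, dyadicTile_def]
      exact Set.prod_mono_left (dI_child_subset_r i a)
    · have hC : dyadicTile (i + 1) j (2 * a + 1) b ∩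
          (Ioi ((↑(2 * a + 1) : ℝ) / 2 ^ (i + 1)) ×ˢ univ) =
          Ioc ((↑(2 * a + 1) : ℝ) / 2 ^ (i + 1)) (((↑(2 * a + 1) : ℝ) + 1) / 2 ^ (i + 1)) ×ˢ dI j b := by
        rw [dyadicTile_def, Set.prod_inter_prod, Set.inter_univ]
        congr 1
        exact Icc_inter_Ioi'
      rw [hC, closure_prod_eq, closure_Ioc (dI_lo_lt_hi (i + 1) (2 * a + 1)).ne, dI_closure]
      exact subset_refl _
    · intro T hTF hne
      rcases hall T hTF with h | h
      · exfalso
        obtain ⟨p, hpT, hpS⟩ := hne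
        have h1 : p.1 ≤ ((↑(2 * a) : ℝ) + 1) / 2 ^ (i + 1) := ((h hpT).1).2
        have h2 : (↑(2 * a + 1) : ℝ) / 2 ^ (i + 1) < p.1 := hpS.1
        rw [hmid] at h1
        linarith
      · exact h

/-! ### merging tilings of the two children -/

lemma Ioo_disj {i a : ℕ} :
    Ioo ((↑(2 * a) : ℝ) / 2 ^ (i + 1)) ((↑(2 * a) + 1) / 2 ^ (i + 1)) ∩
      Ioo ((↑(2 * a + 1) : ℝ) / 2 ^ (i + 1)) ((↑(2 * a + 1) + 1) / 2 ^ (i + 1)) = ∅ := by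
  apply Set.eq_empty_of_forall_notMem
  rintro y ⟨⟨_, h1⟩, h2, _⟩
  push_cast at h1 h2
  linarith

lemma tiling_merge_h {n i j a b : ℕ} {F₁ F₂ : Set (Set (ℝ × ℝ))}
    (h₁ : IsTiling n F₁ (dyadicTile i (j + 1) a (2 * b)))
    (h₂ : IsTiling n F₂ (dyadicTile i (j + 1) a (2 * b + 1))) :
    IsTiling n (F₁ ∪ F₂) (dyadicTile i j a b) := by
  obtain ⟨ht₁, hu₁, hp₁⟩ := h₁
  obtain ⟨ht₂, hu₂, hp₂⟩ := h₂
  have hd : interior (dyadicTile i (j + 1) a (2 * b)) ∩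
      interior (dyadicTile i (j + 1) a (2 * b + 1)) = ∅ := by
    rw [dyadicTile_def, dyadicTile_def, interior_prod_Icc, interior_prod_Icc,
      Set.prod_inter_prod, Ioo_disj, Set.prod_empty]
  have key : ∀ s t : Set (ℝ × ℝ), s ∈ F₁ → t ∈ F₂ → interior s ∩ interior t = ∅ := by
    intro s t hs ht
    have g1 : s ⊆ dyadicTile i (j + 1) a (2 * b) := hu₁ ▸ Set.subset_sUnion_of_mem hs
    have g2 : t ⊆ dyadicTile i (j + 1) a (2 * b + 1) := hu₂ ▸ Set.subset_sUnion_of_mem ht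
    refine Set.subset_empty_iff.mp ?_
    calc interior s ∩ interior t ⊆ _ := Set.inter_subset_inter (interior_mono g1) (interior_mono g2)
      _ = ∅ := hd
  refine ⟨?_, ?_, ?_⟩
  · rintro t (ht | ht)
    exacts [ht₁ t ht, ht₂ t ht]
  · rw [Set.sUnion_union, hu₁, hu₂, dyadicTile_def, dyadicTile_def, ← Set.prod_union, dI_union]
    rfl
  · rintro s (hs | hs) t (ht | ht) hst
    · exact hp₁ hs ht hst
    · exact key s t hs ht
    · rw [Set.inter_comm]; exact key t s ht hs
    · exact hp₂ hs ht hst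

lemma tiling_merge_v {n i j a b : ℕ} {F₁ F₂ : Set (Set (ℝ × ℝ))}
    (h₁ : IsTiling n F₁ (dyadicTile (i + 1) j (2 * a) b))
    (h₂ : IsTiling n F₂ (dyadicTile (i + 1) j (2 * a + 1) b)) :
    IsTiling n (F₁ ∪ F₂) (dyadicTile i j a b) := by
  obtain ⟨ht₁, hu₁, hp₁⟩ := h₁
  obtain ⟨ht₂, hu₂, hp₂⟩ := h₂
  have hd : interior (dyadicTile (i + 1) j (2 * a) b) ∩
      interior (dyadicTile (i + 1) j (2 * a + 1) b) = ∅ := by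
    rw [dyadicTile_def, dyadicTile_def, interior_prod_Icc, interior_prod_Icc,
      Set.prod_inter_prod, Ioo_disj, Set.empty_prod]
  have key : ∀ s t : Set (ℝ × ℝ), s ∈ F₁ → t ∈ F₂ → interior s ∩ interior t = ∅ := by
    intro s t hs ht
    have g1 : s ⊆ dyadicTile (i + 1) j (2 * a) b := hu₁ ▸ Set.subset_sUnion_of_mem hs
    have g2 : t ⊆ dyadicTile (i + 1) j (2 * a + 1) b := hu₂ ▸ Set.subset_sUnion_of_mem ht
    refine Set.subset_empty_iff.mp ?_
    calc interior s ∩ interior t ⊆ _ := Set.inter_subset_inter (interior_mono g1) (interior_mono g2)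
      _ = ∅ := hd
  refine ⟨?_, ?_, ?_⟩
  · rintro t (ht | ht)
    exacts [ht₁ t ht, ht₂ t ht]
  · rw [Set.sUnion_union, hu₁, hu₂, dyadicTile_def, dyadicTile_def, ← Set.union_prod, dI_union]
    rfl
  · rintro s (hs | hs) t (ht | ht) hst
    · exact hp₁ hs ht hst
    · exact key s t hs ht
    · rw [Set.inter_comm]; exact key t s ht hs
    · exact hp₂ hs ht hst

/-! ### the main equivalence -/

lemma tileable_iff (n i j a b : ℕ) (hk : i + j < n) (avail : Set (Set (ℝ × ℝ))) :
    (∃ F, F ⊆ avail ∧ IsTiling n F (dyadicTile i j a b)) ↔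
      ((∃ F, F ⊆ avail ∧ IsTiling n F (dyadicTile i (j + 1) a (2 * b))) ∧
       (∃ F, F ⊆ avail ∧ IsTiling n F (dyadicTile i (j + 1) a (2 * b + 1)))) ∨
      ((∃ F, F ⊆ avail ∧ IsTiling n F (dyadicTile (i + 1) j (2 * a) b)) ∧
       (∃ F, F ⊆ avail ∧ IsTiling n F (dyadicTile (i + 1) j (2 * a + 1) b))) := by
  constructor
  · rintro ⟨F, hFa, hF⟩
    have huni := hF.2.1
    have hsubt : ∀ T ∈ F, T ⊆ dyadicTile i j a b := fun T hT =>
      huni ▸ Set.subset_sUnion_of_mem hT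
    have step : ∀ T ∈ F,
        (T ⊆ dyadicTile i (j + 1) a (2 * b) ∨ T ⊆ dyadicTile i (j + 1) a (2 * b + 1)) ∨
        ∃ i' a', i' + j = n ∧ i < i' ∧ T = dI i' a' ×ˢ dI j b := by
      intro T hT
      obtain ⟨i', j', a', b', hij', _, _, rfl⟩ := hF.1 T hT
      have hsub := prod_dI_subset (hsubt _ hT)
      have hx := hsub.1
      have hy := hsub.2
      have hij_le : i ≤ i' := dI_level_le hx
      have hji_le : j ≤ j' := dI_level_le hy
      rcases Nat.lt_or_ge j j' with hlt | hge
      · left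
        rcases dI_dichotomy hy hlt with h | h
        · exact Or.inl (by rw [dyadicTile_def]; exact Set.prod_mono hx h)
        · exact Or.inr (by rw [dyadicTile_def]; exact Set.prod_mono hx h)
      · have hj : j' = j := le_antisymm hge hji_le
        subst hj
        have hb' : b' = b := dI_eq_of_subset_same hy
        subst hb'
        exact Or.inr ⟨i', a', hij', by omega, rfl⟩
    by_cases hall : ∀ T ∈ F,
        T ⊆ dyadicTile i (j + 1) a (2 * b) ∨ T ⊆ dyadicTile i (j + 1) a (2 * b + 1)
    · left
      obtain ⟨g1, g2⟩ := tiling_split_h hF hall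
      exact ⟨⟨_, fun t ht => hFa ht.1, g1⟩, ⟨_, fun t ht => hFa ht.1, g2⟩⟩
    · right
      push_neg at hall
      obtain ⟨T₀, hT₀F, hn1, hn2⟩ := hall
      rcases step T₀ hT₀F with h | ⟨i₀, a₀, hi₀n, hi₀, hT₀eq⟩
      · rcases h with h | h
        exacts [absurd h hn1, absurd h hn2]
      have hall' : ∀ T ∈ F,
          T ⊆ dyadicTile (i + 1) j (2 * a) b ∨ T ⊆ dyadicTile (i + 1) j (2 * a + 1) b := by
        intro T hT
        obtain ⟨i', j', a', b', hij', _, _, rfl⟩ := hF.1 T hT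
        have hsub := prod_dI_subset (hsubt _ hT)
        have hx := hsub.1
        have hy := hsub.2
        have hij_le : i ≤ i' := dI_level_le hx
        rcases Nat.lt_or_ge i i' with hlt | hge
        · rcases dI_dichotomy hx hlt with h | h
          · exact Or.inl (by rw [dyadicTile_def]; exact Set.prod_mono h hy)
          · exact Or.inr (by rw [dyadicTile_def]; exact Set.prod_mono h hy)
        · exfalso
          have hi : i = i' := le_antisymm hij_le hge
          subst hi
          have ha' : a = a' := (dI_eq_of_subset_same hx).symm
          subst ha'
          have hj' : j < j' := by omega
          have hT₀sub : dI i₀ a₀ ×ˢ dI j b ⊆ dI i a ×ˢ dI j b := by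
            rw [← hT₀eq]
            exact hsubt _ hT₀F
          have hx₀ : dI i₀ a₀ ⊆ dI i a := (prod_dI_subset hT₀sub).1
          have hne : dI i a ×ˢ dI j' b' ≠ T₀ := by
            rw [hT₀eq]
            intro hEq
            have hsub2 : dI i₀ a₀ ×ˢ dI j b ⊆ dI i a ×ˢ dI j' b' := le_of_eq hEq.symm
            have := dI_level_le (prod_dI_subset hsub2).2
            omega
          have hdisj : interior (dI i a ×ˢ dI j' b') ∩ interior T₀ = ∅ := hF.2.2 hT hT₀F hne
          set px := ((a₀ : ℝ) / 2 ^ i₀ + ((a₀ : ℝ) + 1) / 2 ^ i₀) / 2 with hpx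
          set py := ((b' : ℝ) / 2 ^ j' + ((b' : ℝ) + 1) / 2 ^ j') / 2 with hpy
          have hmem : (px, py) ∈ interior (dI i a ×ˢ dI j' b') ∩ interior T₀ := by
            rw [hT₀eq, interior_prod_Icc, interior_prod_Icc]
            constructor
            · exact Set.mk_mem_prod (dI_Ioo_subset hx₀ (dI_mid_mem i₀ a₀)) (dI_mid_mem j' b')
            · exact Set.mk_mem_prod (dI_mid_mem i₀ a₀) (dI_Ioo_subset hy (dI_mid_mem j' b'))
          rw [hdisj] at hmem
          exact hmem
      obtain ⟨g1, g2⟩ := tiling_split_v hF hall'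
      exact ⟨⟨_, fun t ht => hFa ht.1, g1⟩, ⟨_, fun t ht => hFa ht.1, g2⟩⟩
  · rintro (⟨⟨F₁, hF₁a, h₁⟩, ⟨F₂, hF₂a, h₂⟩⟩ | ⟨⟨F₁, hF₁a, h₁⟩, ⟨F₂, hF₂a, h₂⟩⟩)
    · exact ⟨F₁ ∪ F₂, Set.union_subset hF₁a hF₂a, tiling_merge_h h₁ h₂⟩
    · exact ⟨F₁ ∪ F₂, Set.union_subset hF₁a hF₂a, tiling_merge_v h₁ h₂⟩


/-- a tile of order `k < n` is blocked iff at least one of its two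
horizontal children and at least one of its two vertical children is blocked. -/
theorem blocked_iff_children (n k : ℕ) (hk : k < n) (avail : Set (Set (ℝ × ℝ)))
    (havail : ∀ t ∈ avail, IsDyadicTile n t)
    (i j a b : ℕ) (hij : i + j = k) (ha : a < 2 ^ i) (hb : b < 2 ^ j) :
    Blocked n avail (dyadicTile i j a b) ↔
      (Blocked n avail (dyadicTile i (j + 1) a (2 * b)) ∨
        Blocked n avail (dyadicTile i (j + 1) a (2 * b + 1))) ∧
      (Blocked n avail (dyadicTile (i + 1) j (2 * a) b) ∨
        Blocked n avail (dyadicTile (i + 1) j (2 * a + 1) b)) := by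
  have key := tileable_iff n i j a b (by omega) avail
  simp only [Blocked]
  rw [key, not_or, not_and_or, not_and_or]


end
end

section
/- Define f_n(q,z) by f_0(q,z) = z and f_{n+1}(q,z) = f_n(q(1+z), 4qz). Then for all q > 0, z > 0, and every natural number n, f_{n+2}(q,z) · f_n(q,z) = f_{n+1}(q,z)^2 + f_n(q,z) · f_{n+1}(q,z)^2; that is, f_{n+2}/f_{n+1} = f_{n+1}/f_n + f_{n+1}. -/
noncomputable section

/-- The two-variable polynomials `f_n`, defined by
`f_0(q,z) = z` and `f_{n+1}(q,z) = f_n(q(1+z), 4qz)`. -/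
def fpoly : ℕ → ℝ → ℝ → ℝ
  | 0, _, z => z
  | n + 1, q, z => fpoly n (q * (1 + z)) (4 * q * z)

lemma fpoly_pos : ∀ (n : ℕ) (q z : ℝ), 0 < q → 0 < z → 0 < fpoly n q z
  | 0, _, z, _, hz => hz
  | n + 1, q, z, hq, hz => by
    have h1 : 0 < q * (1 + z) := by positivity
    have h2 : 0 < 4 * q * z := by positivity
    exact fpoly_pos n _ _ h1 h2

lemma fpoly_mul : ∀ (n : ℕ) (q z : ℝ), 0 < q → 0 < z →
    fpoly (n + 2) q z * fpoly n q z =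
      fpoly (n + 1) q z ^ 2 + fpoly n q z * fpoly (n + 1) q z ^ 2
  | 0, q, z, hq, hz => by
    show fpoly 2 q z * z = _
    simp only [fpoly]
    ring
  | n + 1, q, z, hq, hz => by
    have h1 : 0 < q * (1 + z) := by positivity
    have h2 : 0 < 4 * q * z := by positivity
    exact fpoly_mul n _ _ h1 h2

/-- for `q, z > 0`, the values `f_n(q,z)` satisfy
`f_{n+2} f_n = f_{n+1}² + f_n f_{n+1}²`, i.e. `f_{n+2}/f_{n+1} = f_{n+1}/f_n + f_{n+1}`. -/
theorem fpoly_recursion (q z : ℝ) (hq : 0 < q) (hz : 0 < z) (n : ℕ) :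
    fpoly (n + 2) q z * fpoly n q z =
        fpoly (n + 1) q z ^ 2 + fpoly n q z * fpoly (n + 1) q z ^ 2 ∧
    fpoly (n + 2) q z / fpoly (n + 1) q z =
        fpoly (n + 1) q z / fpoly n q z + fpoly (n + 1) q z := by
  have hmul := fpoly_mul n q z hq hz
  refine ⟨hmul, ?_⟩
  have h0 := (fpoly_pos n q z hq hz).ne'
  have h1 := (fpoly_pos (n + 1) q z hq hz).ne'
  field_simp
  linear_combination hmul
end
end

section
/- Let (a_n)_{n≥0} be a sequence of reals with a_0 > 0 and a_1 > 0 satisfying a_{n+2}/a_{n+1} = a_{n+1}/a_n + a_{n+1} for every n ≥ 0 (equivalently a_{n+2} a_n = a_{n+1}^2 + a_n a_{n+1}^2, which forces a_n > 0 for all n). Suppose X is a real number such that for some k ≥ 1, a_k/a_{k-1} + a_k/(1−X) ≤ X < 1. Then a_{n+1}/a_n < X for every n, and consequently a_n < a_0 · X^n for every n ≥ 1. -/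
/-- if `a₀, a₁ > 0` and `aₙ₊₂/aₙ₊₁ = aₙ₊₁/aₙ + aₙ₊₁` for all `n` (stated in
the equivalent product form, which forces `aₙ > 0` for all `n`), and `X` satisfies
`a_k/a_{k-1} + a_k/(1-X) ≤ X < 1` for some `k ≥ 1`, then `aₙ₊₁/aₙ < X` for every `n` and
`aₙ < a₀ Xⁿ` for every `n ≥ 1`. -/
theorem sequence_bound (a : ℕ → ℝ) (h0 : 0 < a 0) (h1 : 0 < a 1)
    (hrec : ∀ n : ℕ, a (n + 2) * a n = a (n + 1) ^ 2 + a n * a (n + 1) ^ 2)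
    (X : ℝ) (k : ℕ) (hk : 1 ≤ k)
    (hX : a k / a (k - 1) + a k / (1 - X) ≤ X) (hX1 : X < 1) :
    (∀ n : ℕ, a (n + 1) / a n < X) ∧ ∀ n : ℕ, 1 ≤ n → a n < a 0 * X ^ n := by
  have hpos : ∀ n, 0 < a n := by
    intro n
    induction n using Nat.twoStepInduction with
    | zero => exact h0
    | one => exact h1
    | more n ih1 ih2 =>
      nlinarith [hrec n, sq_nonneg (a (n + 1)), mul_pos ih1 ih2, sq_nonneg (a (n+1) * a n)]
  obtain ⟨j, rfl⟩ : ∃ j, k = j + 1 := ⟨k - 1, (Nat.succ_pred_eq_of_pos hk).symm⟩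
  simp only [Nat.add_sub_cancel] at hX
  have he : 0 < 1 - X := by linarith
  have hX0 : 0 < X := lt_of_lt_of_le (add_pos (div_pos (hpos (j+1)) (hpos j)) (div_pos (hpos (j+1)) he)) hX
  -- cleared-denominator form of the hypothesis
  have base : a (j + 1) * ((1 - X) + a j) ≤ X * a j * (1 - X) := by
    have hj := hpos j
    have hj1 := hpos (j + 1)
    rw [div_add_div _ _ hj.ne' he.ne', div_le_iff₀ (by positivity)] at hX
    nlinarith [hX]
  -- main invariant, propagated forward
  have Q : ∀ m : ℕ, a (j + 1 + m) * ((1 - X) + a (j + m)) ≤ X * a (j + m) * (1 - X) := by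
    intro m
    induction m with
    | zero => simpa using base
    | succ m ih =>
      have hp := hpos (j + m)
      have hq := hpos (j + m + 1)
      have hr := hpos (j + m + 2)
      have hrc := hrec (j + m)
      have key : a (j + m + 1) * ((1 - X) + a (j + m)) ≤ X * a (j + m) * (1 - X) := by
        convert ih using 3 <;> omega
      show a (j + 1 + (m + 1)) * ((1 - X) + a (j + (m + 1))) ≤ X * a (j + (m + 1)) * (1 - X)
      have e1 : j + 1 + (m + 1) = j + m + 2 := by omega
      have e2 : j + (m + 1) = j + m + 1 := by omega
      rw [e1, e2]
      have A : a (j+m+1) * ((1-X) * (1 + a (j+m))) ≤ X * a (j+m) * ((1-X) - a (j+m+1)) := by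
        nlinarith [key]
      have B := mul_le_mul_of_nonneg_right A
        (by positivity : (0:ℝ) ≤ (1-X) + a (j+m+1))
      have C := mul_le_mul_of_nonneg_left B hq.le
      have hrc2 : a (j+m+2) * a (j+m) * ((1-X) * ((1-X) + a (j+m+1)))
          = (a (j+m+1) ^ 2 + a (j+m) * a (j+m+1) ^ 2) * ((1-X) * ((1-X) + a (j+m+1))) := by
        rw [hrc]
      have goal' : (1-X) * a (j+m) * (a (j+m+2) * ((1-X) + a (j+m+1)))
          ≤ (1-X) * a (j+m) * (X * a (j+m+1) * (1-X)) := by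
        nlinarith [C, hrc2, mul_pos (mul_pos hX0 hp) (mul_pos hq (mul_pos hq hq))]
      exact le_of_mul_le_mul_left goal' (by positivity)
  -- ratios are strictly increasing
  have hratio : ∀ n, a (n + 1) / a n < a (n + 2) / a (n + 1) := by
    intro n
    have hp := hpos n
    have hq := hpos (n + 1)
    rw [div_lt_div_iff₀ hp hq]
    nlinarith [hrec n, mul_pos hp hq, sq_nonneg (a (n + 1))]
  have hmono : StrictMono (fun n => a (n + 1) / a n) := strictMono_nat_of_lt_succ hratio
  have hlt : ∀ n : ℕ, a (n + 1) / a n < X := by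
    intro n
    have hjX : ∀ m : ℕ, a (j + m + 1) / a (j + m) < X := by
      intro m
      have hp := hpos (j + m)
      have hq := hpos (j + m + 1)
      have key : a (j + m + 1) * ((1 - X) + a (j + m)) ≤ X * a (j + m) * (1 - X) := by
        have := Q m
        convert this using 3 <;> omega
      rw [div_lt_iff₀ hp]
      nlinarith [mul_pos hq hp]
    rcases le_or_gt j n with h | h
    · obtain ⟨m, rfl⟩ := Nat.exists_eq_add_of_le h
      exact hjX m
    · calc a (n + 1) / a n ≤ a (j + 1) / a j := hmono.monotone h.le
        _ = a (j + 0 + 1) / a (j + 0) := by norm_num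
        _ < X := hjX 0
  refine ⟨hlt, ?_⟩
  have step : ∀ n : ℕ, a (n + 1) < X * a n := by
    intro n
    have := (div_lt_iff₀ (hpos n)).mp (hlt n)
    linarith [this]
  intro n hn
  induction n with
  | zero => omega
  | succ n ih =>
    rcases Nat.eq_or_lt_of_le hn with h | h
    · have : n = 0 := by omega
      subst this
      have := step 0
      simpa [mul_comm] using this.trans_le (le_of_eq (by ring))
    · have hn' : 1 ≤ n := by omega
      have := ih hn'
      calc a (n + 1) < X * a n := step n
        _ < X * (a 0 * X ^ n) := by
            exact mul_lt_mul_of_pos_left this hX0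
        _ = a 0 * X ^ (n + 1) := by ring
end

section
/- Let 0 < q < 1 and define a sequence (a_n) by a_0 = q, a_1 = 4q^2, and a_{n+2}/a_{n+1} = a_{n+1}/a_n + a_{n+1} for all n ≥ 0. Define f_n(q,z) by f_0(q,z) = z and f_{n+1}(q,z) = f_n(q(1+z), 4qz). If for some k ≥ 1 we have a_k < a_{k-1} and (1 − a_k/a_{k-1})^2 ≥ 4 a_k, then for every natural number n, f_n(q,q) ≤ ((1 + a_k/a_{k-1}) / 2)^n. -/
noncomputable section

lemma fpoly_eq_of_rec (n : ℕ) : ∀ b : ℕ → ℝ, (∀ m, 0 < b m) →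
    (∀ m, b (m + 2) * b m = b (m + 1) ^ 2 + b m * b (m + 1) ^ 2) →
    fpoly n (b 1 / (4 * b 0)) (b 0) = b n := by
  induction n with
  | zero => intro b _ _; rfl
  | succ n ih =>
    intro b hb hr
    have h0 := (hb 0).ne'
    have h1 := (hb 1).ne'
    show fpoly n (b 1 / (4 * b 0) * (1 + b 0)) (4 * (b 1 / (4 * b 0)) * b 0) = b (n + 1)
    have e1 : 4 * (b 1 / (4 * b 0)) * b 0 = b 1 := by field_simp
    have e2 : b 1 / (4 * b 0) * (1 + b 0) = b 2 / (4 * b 1) := by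
      rw [div_mul_eq_mul_div, div_eq_div_iff (by positivity) (by positivity)]
      nlinarith [hr 0]
    rw [e1, e2]
    exact ih (fun m => b (m + 1)) (fun m => hb (m + 1)) (fun m => hr (m + 1))

/-- let `0 < q < 1` and let `(aₙ)` satisfy `a₀ = q`, `a₁ = 4q²` and the
recursion `aₙ₊₂/aₙ₊₁ = aₙ₊₁/aₙ + aₙ₊₁` (in product form). If for some `k ≥ 1` we have
`a_k < a_{k-1}` and `(1 - a_k/a_{k-1})² ≥ 4 a_k`, then
`f_n(q,q) ≤ ((1 + a_k/a_{k-1})/2)ⁿ` for every `n`. -/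
theorem fpoly_bound (q : ℝ) (hq0 : 0 < q) (hq1 : q < 1)
    (a : ℕ → ℝ) (ha0 : a 0 = q) (ha1 : a 1 = 4 * q ^ 2)
    (hrec : ∀ n : ℕ, a (n + 2) * a n = a (n + 1) ^ 2 + a n * a (n + 1) ^ 2)
    (k : ℕ) (hk : 1 ≤ k) (hlt : a k < a (k - 1))
    (hineq : (1 - a k / a (k - 1)) ^ 2 ≥ 4 * a k) :
    ∀ n : ℕ, fpoly n q q ≤ ((1 + a k / a (k - 1)) / 2) ^ n := by
  -- positivity of a
  have apos2 : ∀ n, 0 < a n ∧ 0 < a (n + 1) := by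
    intro n
    induction n with
    | zero => exact ⟨ha0 ▸ hq0, by rw [ha1]; positivity⟩
    | succ n ih =>
      refine ⟨ih.2, ?_⟩
      nlinarith [hrec n, ih.1, ih.2, sq_nonneg (a (n + 1))]
  have apos : ∀ n, 0 < a n := fun n => (apos2 n).1
  -- ratio recursion
  have ρrec : ∀ n, a (n + 2) / a (n + 1) = a (n + 1) / a n + a (n + 1) := by
    intro n
    have h0 := (apos n).ne'
    have h1 := (apos (n + 1)).ne'
    field_simp
    nlinarith [hrec n]
  -- monotonicity of ratios
  have hmono : Monotone (fun n => a (n + 1) / a n) := by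
    apply monotone_nat_of_le_succ
    intro n
    rw [ρrec n]
    linarith [apos (n + 1)]
  -- fpoly n q q = a n
  have hfeq : ∀ n, fpoly n q q = a n := by
    intro n
    have hq' : a 1 / (4 * a 0) = q := by
      rw [ha0, ha1]; field_simp
    have := fpoly_eq_of_rec n a apos hrec
    rwa [hq', ha0] at this
  obtain ⟨j, rfl⟩ : ∃ j, k = j + 1 := ⟨k - 1, (Nat.succ_pred_eq_of_pos hk).symm⟩
  simp only [Nat.add_sub_cancel] at hlt hineq ⊢
  set r : ℝ := a (j + 1) / a j with hr
  set c : ℝ := (1 + r) / 2 with hc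
  have hr0 : 0 < r := div_pos (apos (j + 1)) (apos j)
  have hr1 : r < 1 := (div_lt_one (apos j)).2 hlt
  have hc0 : 0 < c := by rw [hc]; linarith
  have hc1 : c < 1 := by rw [hc]; linarith
  have hrc : r ≤ c := by rw [hc]; linarith
  have h1c : 0 < 1 - c := by linarith
  clear_value r c
  -- bound for n ≤ j + 1
  have hle : ∀ n, n ≤ j + 1 → a n ≤ c ^ n := by
    intro n
    induction n with
    | zero => intro _; simpa [ha0] using hq1.le
    | succ n ih =>
      intro hn
      have hn' : n ≤ j := Nat.lt_succ_iff.mp hn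
      have hρ : a (n + 1) / a n ≤ c := by
        have h := hmono hn'
        simp only [] at h
        rw [← hr] at h
        exact le_trans h hrc
      have e : a (n + 1) = a (n + 1) / a n * a n :=
        (div_mul_cancel₀ _ (apos n).ne').symm
      rw [e, pow_succ, mul_comm (c ^ n) c]
      exact mul_le_mul hρ (ih (by omega)) (apos n).le hc0.le
  -- the invariant for n ≥ j + 1
  have hinv : ∀ m, a (j + 1 + m) ≤ a (j + 1) * c ^ m ∧
      a (j + 1 + m + 1) / a (j + 1 + m) ≤ c - a (j + 1) * c ^ (m + 1) / (1 - c) := by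
    intro m
    induction m with
    | zero =>
      constructor
      · simp
      · show a (j + 1 + 1) / a (j + 1) ≤ _
        have : a (j + 1 + 1) / a (j + 1) = r + a (j + 1) := by
          rw [hr]; exact ρrec j
        rw [this]
        rw [← sub_nonneg]
        have h1r : (1 : ℝ) - r ≠ 0 := by intro h; rw [hc] at h1c; linarith [sub_eq_zero.mp h]
        have expand : c - a (j + 1) * c ^ (0 + 1) / (1 - c) - (r + a (j + 1))
            = ((1 - r) ^ 2 - 4 * a (j + 1)) / (4 * (1 - c)) := by
          rw [hc]
          have h2 : (1 : ℝ) - (1 + r) / 2 = (1 - r) / 2 := by ring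
          rw [h2]
          field_simp
          ring
        rw [expand]
        apply div_nonneg (by linarith) (by linarith)
    | succ m ih =>
      obtain ⟨h1, h2⟩ := ih
      have hDnn : 0 ≤ a (j + 1) * c ^ (m + 1) / (1 - c) :=
        div_nonneg (mul_nonneg (apos _).le (pow_nonneg hc0.le _)) h1c.le
      have hρc : a (j + 1 + m + 1) / a (j + 1 + m) ≤ c := by linarith
      have e : a (j + 1 + m + 1) = a (j + 1 + m + 1) / a (j + 1 + m) * a (j + 1 + m) :=
        (div_mul_cancel₀ _ (apos _).ne').symm
      have ha' : a (j + 1 + (m + 1)) ≤ a (j + 1) * c ^ (m + 1) := by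
        have : a (j + 1 + (m + 1)) = a (j + 1 + m + 1) := by ring_nf
        rw [this, e]
        calc a (j + 1 + m + 1) / a (j + 1 + m) * a (j + 1 + m)
            ≤ c * (a (j + 1) * c ^ m) :=
              mul_le_mul hρc h1 (apos _).le hc0.le
          _ = a (j + 1) * c ^ (m + 1) := by ring
      refine ⟨ha', ?_⟩
      have hρr : a (j + 1 + (m + 1) + 1) / a (j + 1 + (m + 1))
          = a (j + 1 + m + 1) / a (j + 1 + m) + a (j + 1 + m + 1) := by
        have : j + 1 + (m + 1) = (j + 1 + m) + 1 := by ring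
        rw [this]
        exact ρrec (j + 1 + m)
      have key : a (j + 1) * c ^ (m + 1 + 1) / (1 - c)
          = a (j + 1) * c ^ (m + 1) / (1 - c) - a (j + 1) * c ^ (m + 1) := by
        field_simp; ring
      rw [hρr, key]
      have := ha'
      have e2 : a (j + 1 + (m + 1)) = a (j + 1 + m + 1) := by ring_nf
      rw [e2] at this
      linarith
  -- global bound
  have hglob : ∀ n, a n ≤ c ^ n := by
    intro n
    rcases le_or_gt n (j + 1) with h | h
    · exact hle n h
    · obtain ⟨m, rfl⟩ : ∃ m, n = j + 1 + m := ⟨n - (j + 1), by omega⟩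
      calc a (j + 1 + m) ≤ a (j + 1) * c ^ m := (hinv m).1
        _ ≤ c ^ (j + 1) * c ^ m :=
            mul_le_mul_of_nonneg_right (hle (j + 1) le_rfl) (by positivity)
        _ = c ^ (j + 1 + m) := (pow_add c (j + 1) m).symm
  intro n
  rw [hfeq n]
  exact hglob n
end
end
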